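/- arXiv:2006.16330 — 3 statements merged into one kernel-verified Lean document; each statement's English description precedes it below -/
import Mathlib

section
/- Let (H, 𝔞) be a right unitary comodule over a weak Hopf *-algebra B. Then the map α : B_s → B(H) defined by α(z)v := v^{(1)} ε(z v^{(2)}) (writing 𝔞(v) = v^{(1)} ⊗ v^{(2)}) satisfies ⟨α(z)v, w⟩ = ⟨v, α(z*)w⟩ for all v, w ∈ H and z ∈ B_s, i.e. α(z)* = α(z*). -/
open scoped TensorProduct
open TensorProduct

noncomputable section

/-- The conjugate-linear "star" operation on a tensor product of two star modules,
defined via a choice of bases so that `star (x ⊗ y) = star x ⊗ star y`. -/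
def tensorStar (M N : Type) [AddCommGroup M] [Module ℂ M] [Module.Finite ℂ M]
    [Module.Free ℂ M] [StarAddMonoid M] [AddCommGroup N] [Module ℂ N] [Module.Finite ℂ N]
    [Module.Free ℂ N] [StarAddMonoid N] (t : M ⊗[ℂ] N) : M ⊗[ℂ] N :=
  let bM := Module.Free.chooseBasis ℂ M
  let bN := Module.Free.chooseBasis ℂ N
  ∑ p : Module.Free.ChooseBasisIndex ℂ M × Module.Free.ChooseBasisIndex ℂ N,
    (starRingEnd ℂ) (((bM.tensorProduct bN).repr t) p) • (star (bM p.1) ⊗ₜ[ℂ] star (bN p.2))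


section TensorStarAux
variable {M N : Type} [AddCommGroup M] [Module ℂ M] [Module.Finite ℂ M]
    [Module.Free ℂ M] [StarAddMonoid M] [AddCommGroup N] [Module ℂ N] [Module.Finite ℂ N]
    [Module.Free ℂ N] [StarAddMonoid N]

lemma tensorStar_sum {ι : Type*} (s : Finset ι) (t : ι → M ⊗[ℂ] N) :
    tensorStar M N (∑ i ∈ s, t i) = ∑ i ∈ s, tensorStar M N (t i) := by
  unfold tensorStar
  simp only [map_sum, Finsupp.coe_finset_sum, Finset.sum_apply, Finset.sum_smul]
  exact Finset.sum_comm

lemma tensorStar_tmul [StarModule ℂ M] [StarModule ℂ N] (x : M) (y : N) :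
    tensorStar M N (x ⊗ₜ[ℂ] y) = star x ⊗ₜ[ℂ] star y := by
  classical
  set bM := Module.Free.chooseBasis ℂ M with hbM
  set bN := Module.Free.chooseBasis ℂ N with hbN
  have hsx : star x = ∑ i, (starRingEnd ℂ) (bM.repr x i) • star (bM i) := by
    conv_lhs => rw [← bM.sum_repr x]
    rw [star_sum]
    refine Finset.sum_congr rfl fun i _ => ?_
    rw [star_smul, starRingEnd_apply]
  have hsy : star y = ∑ j, (starRingEnd ℂ) (bN.repr y j) • star (bN j) := by
    conv_lhs => rw [← bN.sum_repr y]
    rw [star_sum]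
    refine Finset.sum_congr rfl fun j _ => ?_
    rw [star_smul, starRingEnd_apply]
  rw [hsx, hsy, sum_tmul]
  unfold tensorStar
  rw [← hbM, ← hbN, Fintype.sum_prod_type]
  refine Finset.sum_congr rfl fun i _ => ?_
  rw [tmul_sum]
  refine Finset.sum_congr rfl fun j _ => ?_
  rw [Module.Basis.tensorProduct_repr_tmul_apply]
  simp only [smul_eq_mul, map_mul, tmul_smul, smul_tmul', smul_smul]

end TensorStarAux

/-- A weak Hopf `*`-algebra structure on a finite-dimensional `C*`-algebra `B`. -/
structure WHA (B : Type) [NormedRing B] [StarRing B] [CStarRing B] [NormedAlgebra ℂ B]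
    [StarModule ℂ B] [FiniteDimensional ℂ B] where
  Δ : B →ₗ[ℂ] B ⊗[ℂ] B
  ε : B →ₗ[ℂ] ℂ
  S : B →ₗ[ℂ] B
  coassoc : ∀ b : B, (TensorProduct.assoc ℂ B B B) ((TensorProduct.map Δ LinearMap.id) (Δ b)) =
    (TensorProduct.map LinearMap.id Δ) (Δ b)
  counit_left : ∀ b : B, (TensorProduct.lid ℂ B) ((TensorProduct.map ε LinearMap.id) (Δ b)) = b
  counit_right : ∀ b : B, (TensorProduct.rid ℂ B) ((TensorProduct.map LinearMap.id ε) (Δ b)) = b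
  comul_mul : ∀ a b : B, Δ (a * b) = Δ a * Δ b
  weak_counit : ∀ b c d : B, (TensorProduct.lid ℂ ℂ)
      ((TensorProduct.map (ε ∘ₗ LinearMap.mulLeft ℂ b) (ε ∘ₗ LinearMap.mulRight ℂ d)) (Δ c)) =
    ε (b * c * d)
  weak_comul_one : (TensorProduct.map Δ LinearMap.id) (Δ 1) =
    (Δ 1 ⊗ₜ[ℂ] (1 : B)) * ((TensorProduct.assoc ℂ B B B).symm ((1 : B) ⊗ₜ[ℂ] Δ 1))
  comul_star : ∀ b : B, Δ (star b) = tensorStar B B (Δ b)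
  antipode_mul : ∀ a b : B, S (a * b) = S b * S a
  antipode_one : S 1 = 1
  antipode_comul : ∀ b : B, Δ (S b) =
    (TensorProduct.map S S) ((TensorProduct.comm ℂ B B) (Δ b))
  counit_antipode : ∀ b : B, ε (S b) = ε b
  antipode_left : ∀ b : B, LinearMap.mul' ℂ B ((TensorProduct.map LinearMap.id S) (Δ b)) =
    (TensorProduct.lid ℂ B) ((TensorProduct.map ε LinearMap.id) (Δ 1 * (b ⊗ₜ[ℂ] (1 : B))))
  antipode_right : ∀ b : B, LinearMap.mul' ℂ B ((TensorProduct.map S LinearMap.id) (Δ b)) =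
    (TensorProduct.rid ℂ B) ((TensorProduct.map LinearMap.id ε) (((1 : B) ⊗ₜ[ℂ] b) * Δ 1))

namespace WHA

variable {B : Type} [NormedRing B] [StarRing B] [CStarRing B] [NormedAlgebra ℂ B]
  [StarModule ℂ B] [FiniteDimensional ℂ B]

/-- The target counital map `ε_t(b) = (ε ⊗ id)(Δ(1)(b ⊗ 1))`. -/
def εt (W : WHA B) (b : B) : B :=
  (TensorProduct.lid ℂ B) ((TensorProduct.map W.ε LinearMap.id) (W.Δ 1 * (b ⊗ₜ[ℂ] (1 : B))))

/-- The source counital map `ε_s(b) = (id ⊗ ε)((1 ⊗ b)Δ(1))`. -/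
def εs (W : WHA B) (b : B) : B :=
  (TensorProduct.rid ℂ B) ((TensorProduct.map LinearMap.id W.ε) (((1 : B) ⊗ₜ[ℂ] b) * W.Δ 1))

/-- The target counital subalgebra `B_t = ε_t(B)`. -/
def Bt (W : WHA B) : Submodule ℂ B := Submodule.span ℂ (Set.range W.εt)

/-- The source counital subalgebra `B_s = ε_s(B)`. -/
def Bs (W : WHA B) : Submodule ℂ B := Submodule.span ℂ (Set.range W.εs)

/-- The right adjoint action `b ◁ x = S(x₍₁₎) b x₍₂₎`. -/
def ad (W : WHA B) (b x : B) : B :=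
  LinearMap.mul' ℂ B ((TensorProduct.map W.S (LinearMap.mulLeft ℂ b)) (W.Δ x))

/-- `I` is a (right) coideal of `B`: a unital `*`-subalgebra with `Δ(I) ⊆ I ⊗ B`. -/
def IsCoideal (W : WHA B) (I : Submodule ℂ B) : Prop :=
  (1 : B) ∈ I ∧ (∀ a ∈ I, ∀ b ∈ I, a * b ∈ I) ∧ (∀ a ∈ I, star a ∈ I) ∧
    ∀ a ∈ I, W.Δ a ∈ Submodule.span ℂ {x : B ⊗[ℂ] B | ∃ u ∈ I, ∃ v : B, x = u ⊗ₜ[ℂ] v}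

/-- A coideal is invariant if `span{ b ◁ x : b ∈ I, x ∈ B } = I`. -/
def IsInvariant (W : WHA B) (I : Submodule ℂ B) : Prop :=
  Submodule.span ℂ {y : B | ∃ b ∈ I, ∃ x : B, y = W.ad b x} = I

end WHA


section WHAAux
variable {B : Type} [NormedRing B] [StarRing B] [CStarRing B] [NormedAlgebra ℂ B]
  [StarModule ℂ B] [FiniteDimensional ℂ B] (W : WHA B)

lemma WHA.comul_star_sum {ι : Type*} {c : B} {s : Finset ι} {p q : ι → B}
    (hs : W.Δ c = ∑ i ∈ s, p i ⊗ₜ[ℂ] q i) :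
    W.Δ (star c) = ∑ i ∈ s, star (p i) ⊗ₜ[ℂ] star (q i) := by
  rw [W.comul_star, hs, tensorStar_sum]
  exact Finset.sum_congr rfl fun i _ => tensorStar_tmul _ _

/-- `ε(b*) = conj (ε b)`. -/
lemma WHA.eps_star (b : B) : W.ε (star b) = (starRingEnd ℂ) (W.ε b) := by
  obtain ⟨s, hs⟩ := TensorProduct.exists_finset (W.Δ b)
  have hstar := W.comul_star_sum hs
  have h1 : star b = ∑ p ∈ s, W.ε (star p.1) • star p.2 := by
    conv_lhs => rw [← W.counit_left (star b)]
    rw [hstar]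
    simp [map_sum]
  have h1' : b = ∑ p ∈ s, (starRingEnd ℂ) (W.ε (star p.1)) • p.2 := by
    have h := congrArg star h1
    rw [star_star] at h
    rw [h, star_sum]
    refine Finset.sum_congr rfl fun p _ => ?_
    rw [star_smul, star_star, starRingEnd_apply]
  have h2 : b = ∑ p ∈ s, W.ε p.2 • p.1 := by
    conv_lhs => rw [← W.counit_right b]
    rw [hs]
    simp [map_sum]
  have e1 : W.ε b = ∑ p ∈ s, (starRingEnd ℂ) (W.ε (star p.1)) * W.ε p.2 := by
    conv_lhs => rw [h1']
    simp [map_sum]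
  have e2 : W.ε (star b) = ∑ p ∈ s, (starRingEnd ℂ) (W.ε p.2) * W.ε (star p.1) := by
    have hb : star b = ∑ p ∈ s, (starRingEnd ℂ) (W.ε p.2) • star p.1 := by
      conv_lhs => rw [h2]
      rw [star_sum]
      refine Finset.sum_congr rfl fun p _ => ?_
      rw [star_smul, starRingEnd_apply]
    conv_lhs => rw [hb]
    simp [map_sum]
  rw [e2, e1, map_sum]
  refine Finset.sum_congr rfl fun pr _ => ?_
  rw [map_mul, Complex.conj_conj, mul_comm]

/-- dual form of the weak counit axiom. -/
lemma WHA.weak_counit' {ι : Type*} (f d : B) {c : B} {s : Finset ι} {p q : ι → B}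
    (hs : W.Δ c = ∑ i ∈ s, p i ⊗ₜ[ℂ] q i) :
    ∑ i ∈ s, W.ε (f * q i) * W.ε (p i * d) = W.ε (f * c * d) := by
  have hstar := W.comul_star_sum hs
  have hw := W.weak_counit (star d) (star c) (star f)
  have hw' : ∑ i ∈ s, W.ε (star d * star (p i)) * W.ε (star (q i) * star f)
      = W.ε (star d * star c * star f) := by
    rw [← hw, hstar]
    simp [map_sum]
  have hm : star d * star c * star f = star (f * c * d) := by
    rw [star_mul, star_mul]
    rw [mul_assoc]
  rw [hm] at hw'
  have := congrArg (starRingEnd ℂ) hw'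
  rw [W.eps_star, Complex.conj_conj, map_sum] at this
  rw [← this]
  refine Finset.sum_congr rfl fun i _ => ?_
  rw [show star d * star (p i) = star (p i * d) by rw [star_mul]]
  rw [show star (q i) * star f = star (f * q i) by rw [star_mul]]
  rw [W.eps_star, W.eps_star, map_mul (starRingEnd ℂ), Complex.conj_conj,
    Complex.conj_conj, mul_comm]

/-- `ε(ε_s(b) x) = ε(bx)`. -/
lemma WHA.eps_s_mul (b x : B) : W.ε (W.εs b * x) = W.ε (b * x) := by
  obtain ⟨s, hs⟩ := TensorProduct.exists_finset (W.Δ (1 : B))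
  have hεs : W.εs b = ∑ p ∈ s, W.ε (b * p.2) • p.1 := by
    rw [WHA.εs, hs, Finset.mul_sum]
    simp [Algebra.TensorProduct.tmul_mul_tmul, map_sum]
  have key := W.weak_counit' b x hs
  rw [mul_one] at key
  rw [hεs, Finset.sum_mul, map_sum]
  simp only [smul_mul_assoc, map_smul, smul_eq_mul]
  exact key


set_option synthInstance.maxHeartbeats 1000000 in
set_option maxHeartbeats 1000000 in
/-- `ε(S(u) ε_s(c)) = ε(cu)`. -/
lemma WHA.eps_S_mul_eps_s (u c : B) : W.ε (W.S u * W.εs c) = W.ε (c * u) := by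
  classical
  choose T hT using fun x : B => TensorProduct.exists_finset (W.Δ x)
  -- Step A : ε_s(c) = ∑ S i.1 * i.2
  have hA : W.εs c = ∑ i ∈ T c, W.S i.1 * i.2 := by
    rw [WHA.εs, ← W.antipode_right c, hT c]
    simp [map_sum, LinearMap.mul'_apply]
  -- comultiplication of S x
  have hScomul : ∀ x : B, W.Δ (W.S x) = ∑ j ∈ T x, W.S j.2 ⊗ₜ[ℂ] W.S j.1 := fun x => by
    rw [W.antipode_comul, hT x]
    simp [map_sum]
  -- Step B : expand LHS
  have hB : ∀ i : B × B, W.ε (W.S u * (W.S i.1 * i.2))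
      = ∑ j ∈ T i.1, W.ε (j.2 * u) * W.ε (W.S j.1 * i.2) := by
    intro i
    rw [← mul_assoc, ← W.weak_counit (W.S u) (W.S i.1) i.2, hScomul i.1]
    simp only [map_sum, TensorProduct.map_tmul, LinearMap.coe_comp, Function.comp_apply,
      LinearMap.mulLeft_apply, LinearMap.mulRight_apply, TensorProduct.lid_tmul, smul_eq_mul]
    refine Finset.sum_congr rfl fun j _ => ?_
    rw [show W.S u * W.S j.2 = W.S (j.2 * u) from (W.antipode_mul j.2 u).symm,
      W.counit_antipode]
  have hL : W.ε (W.S u * W.εs c)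
      = ∑ i ∈ T c, ∑ j ∈ T i.1, W.ε (j.2 * u) * W.ε (W.S j.1 * i.2) := by
    rw [hA, Finset.mul_sum, map_sum]
    exact Finset.sum_congr rfl fun i _ => hB i
  -- the linear functional Ψ
  set Ψ : B ⊗[ℂ] (B ⊗[ℂ] B) →ₗ[ℂ] ℂ :=
    (TensorProduct.lid ℂ ℂ).toLinearMap ∘ₗ
      TensorProduct.map (W.ε ∘ₗ LinearMap.mulRight ℂ u)
        (W.ε ∘ₗ LinearMap.mul' ℂ B ∘ₗ TensorProduct.map W.S LinearMap.id) ∘ₗ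
      (TensorProduct.assoc ℂ B B B).toLinearMap ∘ₗ
      (TensorProduct.map (TensorProduct.comm ℂ B B).toLinearMap LinearMap.id) ∘ₗ
      (TensorProduct.assoc ℂ B B B).symm.toLinearMap with hΨdef
  have hΨ : ∀ a b' c' : B, Ψ (a ⊗ₜ[ℂ] (b' ⊗ₜ[ℂ] c')) = W.ε (b' * u) * W.ε (W.S a * c') := by
    intro a b' c'
    simp [hΨdef, LinearMap.mul'_apply, smul_eq_mul]
  -- coassociativity with explicit sums
  have hco1 : (TensorProduct.assoc ℂ B B B) ((TensorProduct.map W.Δ LinearMap.id) (W.Δ c))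
      = ∑ i ∈ T c, ∑ j ∈ T i.1, j.1 ⊗ₜ[ℂ] (j.2 ⊗ₜ[ℂ] i.2) := by
    rw [hT c, map_sum, map_sum]
    refine Finset.sum_congr rfl fun i _ => ?_
    rw [TensorProduct.map_tmul, LinearMap.id_coe, id_eq, hT i.1, sum_tmul, map_sum]
    refine Finset.sum_congr rfl fun j _ => ?_
    rw [TensorProduct.assoc_tmul]
  have hco2 : (TensorProduct.map LinearMap.id W.Δ) (W.Δ c)
      = ∑ i ∈ T c, ∑ j ∈ T i.2, i.1 ⊗ₜ[ℂ] (j.1 ⊗ₜ[ℂ] j.2) := by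
    rw [hT c, map_sum]
    refine Finset.sum_congr rfl fun i _ => ?_
    rw [TensorProduct.map_tmul, LinearMap.id_coe, id_eq, hT i.2, tmul_sum]
  have hD : ∑ i ∈ T c, ∑ j ∈ T i.1, W.ε (j.2 * u) * W.ε (W.S j.1 * i.2)
      = ∑ i ∈ T c, ∑ j ∈ T i.2, W.ε (j.1 * u) * W.ε (W.S i.1 * j.2) := by
    have h := congrArg Ψ (hco1 ▸ hco2 ▸ W.coassoc c)
    simpa only [map_sum, hΨ] using h
  -- apply weak_counit' on the right hand side
  have hR : ∀ i : B × B, ∑ j ∈ T i.2, W.ε (W.S i.1 * j.2) * W.ε (j.1 * u)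
      = W.ε (W.S i.1 * i.2 * u) := fun i => W.weak_counit' (W.S i.1) u (hT i.2)
  rw [hL, hD]
  have : ∑ i ∈ T c, ∑ j ∈ T i.2, W.ε (j.1 * u) * W.ε (W.S i.1 * j.2)
      = ∑ i ∈ T c, W.ε (W.S i.1 * i.2 * u) := by
    refine Finset.sum_congr rfl fun i _ => ?_
    rw [← hR i]
    exact Finset.sum_congr rfl fun j _ => mul_comm _ _
  rw [this]
  have hsum : ∑ i ∈ T c, W.ε (W.S i.1 * i.2 * u) = W.ε (W.εs c * u) := by
    rw [hA, Finset.sum_mul, map_sum]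
  rw [hsum, W.eps_s_mul]

end WHAAux

/-- A morphism of weak Hopf `*`-algebras. -/
structure WHAHom {B C : Type} [NormedRing B] [StarRing B] [CStarRing B] [NormedAlgebra ℂ B]
    [StarModule ℂ B] [FiniteDimensional ℂ B] [NormedRing C] [StarRing C] [CStarRing C]
    [NormedAlgebra ℂ C] [StarModule ℂ C] [FiniteDimensional ℂ C]
    (W : WHA B) (W' : WHA C) where
  π : B →⋆ₐ[ℂ] C
  comul_comp : ∀ b : B, W'.Δ (π b) = (TensorProduct.map π.toLinearMap π.toLinearMap) (W.Δ b)
  antipode_comp : ∀ b : B, W'.S (π b) = π (W.S b)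
  counit_comp : ∀ b : B, W'.ε (π b) = W.ε b


/-- A right unitary comodule over a weak Hopf `*`-algebra. -/
structure UComod {B : Type} [NormedRing B] [StarRing B] [CStarRing B] [NormedAlgebra ℂ B]
    [StarModule ℂ B] [FiniteDimensional ℂ B] (W : WHA B)
    (H : Type) [NormedAddCommGroup H] [InnerProductSpace ℂ H] [FiniteDimensional ℂ H] where
  ρ : H →ₗ[ℂ] H ⊗[ℂ] B
  coassoc : ∀ v : H, (TensorProduct.assoc ℂ H B B) ((TensorProduct.map ρ LinearMap.id) (ρ v)) =
    (TensorProduct.map LinearMap.id W.Δ) (ρ v)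
  counit : ∀ v : H, (TensorProduct.rid ℂ H) ((TensorProduct.map LinearMap.id W.ε) (ρ v)) = v
  unitarity : ∀ v w : H,
    (TensorProduct.lid ℂ B) ((TensorProduct.map (innerSL ℂ w).toLinearMap LinearMap.id) (ρ v)) =
    star ((TensorProduct.lid ℂ B) ((TensorProduct.map (innerSL ℂ v).toLinearMap W.S) (ρ w)))

/-- for a right unitary comodule `(H, ρ)` over a WHA, the map
`α(z) v = v⁽¹⁾ ε(z v⁽²⁾)` satisfies `⟨α(z)v, w⟩ = ⟨v, α(z*)w⟩` for `z ∈ B_s`,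
i.e. `α(z)* = α(z*)`. Here `⟨a, b⟩` denotes the inner product, linear in `a`. -/
theorem comodule_alpha_star {B : Type} [NormedRing B] [StarRing B] [CStarRing B]
    [NormedAlgebra ℂ B] [StarModule ℂ B] [FiniteDimensional ℂ B] (W : WHA B)
    (H : Type) [NormedAddCommGroup H] [InnerProductSpace ℂ H] [FiniteDimensional ℂ H]
    (M : UComod W H)
    (α : B → H → H)
    (hα : ∀ z : B, ∀ v : H, α z v =
      (TensorProduct.rid ℂ H)
        ((TensorProduct.map LinearMap.id (W.ε ∘ₗ LinearMap.mulLeft ℂ z)) (M.ρ v))) :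
    ∀ z ∈ W.Bs, ∀ v w : H,
      (inner ℂ (w : H) (α z v) : ℂ) = inner ℂ (α (star z) w) v := by
  classical
  have halpha : ∀ (z : B) (v : H) (s : Finset (H × B)),
      M.ρ v = ∑ p ∈ s, p.1 ⊗ₜ[ℂ] p.2 → α z v = ∑ p ∈ s, W.ε (z * p.2) • p.1 := by
    intro z v s hs
    rw [hα, hs]
    simp [map_sum, TensorProduct.map_tmul, LinearMap.mulLeft_apply, TensorProduct.rid_tmul]
  intro z hz
  refine Submodule.span_induction
    (p := fun z _ => ∀ v w : H, (inner ℂ (w : H) (α z v) : ℂ) = inner ℂ (α (star z) w) v)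
    ?_ ?_ ?_ ?_ hz
  · rintro z ⟨b, rfl⟩ v w
    obtain ⟨sv, hv⟩ := TensorProduct.exists_finset (M.ρ v)
    obtain ⟨sw, hw⟩ := TensorProduct.exists_finset (M.ρ w)
    -- sum version of unitarity
    have hUsum : ∑ q ∈ sw, (inner ℂ v q.1 : ℂ) • q.2
        = star (∑ p ∈ sv, (inner ℂ w p.1 : ℂ) • W.S p.2) := by
      have hU := M.unitarity w v
      rw [hw, hv] at hU
      simpa [map_sum, TensorProduct.map_tmul, TensorProduct.lid_tmul] using hU
    have hLHS : (inner ℂ (w : H) (α (W.εs b) v) : ℂ)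
        = ∑ p ∈ sv, W.ε (W.εs b * p.2) * (inner ℂ w p.1 : ℂ) := by
      rw [halpha _ v sv hv, inner_sum]
      exact Finset.sum_congr rfl fun p _ => inner_smul_right _ _ _
    rw [hLHS]
    have hR1 : (inner ℂ (α (star (W.εs b)) w) v : ℂ)
        = ∑ q ∈ sw, W.ε (star q.2 * W.εs b) * (inner ℂ q.1 v : ℂ) := by
      rw [← inner_conj_symm, halpha _ w sw hw, inner_sum, map_sum]
      refine Finset.sum_congr rfl fun q _ => ?_
      rw [inner_smul_right, map_mul (starRingEnd ℂ), inner_conj_symm, ← W.eps_star,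
        show star (star (W.εs b) * q.2) = star q.2 * W.εs b by rw [star_mul, star_star]]
    have hR2 : ∑ q ∈ sw, W.ε (star q.2 * W.εs b) * (inner ℂ q.1 v : ℂ)
        = W.ε (star (∑ q ∈ sw, (inner ℂ v q.1 : ℂ) • q.2) * W.εs b) := by
      rw [star_sum, Finset.sum_mul, map_sum]
      refine Finset.sum_congr rfl fun q _ => ?_
      rw [star_smul, smul_mul_assoc, map_smul, smul_eq_mul, ← starRingEnd_apply,
        inner_conj_symm, mul_comm]
    have hR3 : star (∑ q ∈ sw, (inner ℂ v q.1 : ℂ) • q.2)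
        = ∑ p ∈ sv, (inner ℂ w p.1 : ℂ) • W.S p.2 := by
      rw [hUsum, star_star]
    rw [hR1, hR2, hR3, Finset.sum_mul, map_sum]
    refine Finset.sum_congr rfl fun p _ => ?_
    rw [smul_mul_assoc, map_smul, smul_eq_mul, W.eps_S_mul_eps_s p.2 b, W.eps_s_mul,
      mul_comm]
  · intro v w
    obtain ⟨sv, hv⟩ := TensorProduct.exists_finset (M.ρ v)
    obtain ⟨sw, hw⟩ := TensorProduct.exists_finset (M.ρ w)
    rw [halpha 0 v sv hv, star_zero, halpha 0 w sw hw]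
    simp
  · intro x y hxm hym hx hy v w
    obtain ⟨sv, hv⟩ := TensorProduct.exists_finset (M.ρ v)
    obtain ⟨sw, hw⟩ := TensorProduct.exists_finset (M.ρ w)
    have hxv : α (x + y) v = α x v + α y v := by
      rw [halpha _ v sv hv, halpha x v sv hv, halpha y v sv hv, ← Finset.sum_add_distrib]
      refine Finset.sum_congr rfl fun p _ => ?_
      rw [add_mul, map_add, add_smul]
    have hxw : α (star (x + y)) w = α (star x) w + α (star y) w := by
      rw [star_add, halpha _ w sw hw, halpha (star x) w sw hw, halpha (star y) w sw hw,
        ← Finset.sum_add_distrib]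
      refine Finset.sum_congr rfl fun q _ => ?_
      rw [add_mul, map_add, add_smul]
    rw [hxv, hxw, inner_add_right, inner_add_left, hx v w, hy v w]
  · intro a x hxm hx v w
    obtain ⟨sv, hv⟩ := TensorProduct.exists_finset (M.ρ v)
    obtain ⟨sw, hw⟩ := TensorProduct.exists_finset (M.ρ w)
    have hxv : α (a • x) v = a • α x v := by
      rw [halpha _ v sv hv, halpha x v sv hv, Finset.smul_sum]
      refine Finset.sum_congr rfl fun p _ => ?_
      rw [smul_mul_assoc, map_smul, smul_smul, smul_eq_mul]
    have hxw : α (star (a • x)) w = (starRingEnd ℂ) a • α (star x) w := by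
      rw [star_smul, starRingEnd_apply, halpha _ w sw hw, halpha (star x) w sw hw,
        Finset.smul_sum]
      refine Finset.sum_congr rfl fun q _ => ?_
      rw [smul_mul_assoc, map_smul, smul_smul, smul_eq_mul]
    rw [hxv, hxw, inner_smul_right, inner_smul_left, Complex.conj_conj, hx v w]


end
end

section
/- Let B be a weak Hopf *-algebra with dual WHA B̂, and let B̂_t, B̂_s be the counital subalgebras of B̂. For b ∈ B, define b ⟵ φ := ⟨φ, b₍₁₎⟩ b₍₂₎ for φ ∈ B̂. Then the following are equivalent: (i) b ⟵ φ = b·(1 ⟵ φ) for every φ in the subalgebra B̂_t B̂_s of B̂; (ii) b commutes with every element of B_t. (In other words, the quotient type coideal corresponding to the surjection of B onto the dual of the minimal WHA B̂_t B̂_s is exactly the commutant of B_t in B, and it is the greatest quotient type coideal.) -/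
open scoped TensorProduct
open TensorProduct

noncomputable section

namespace WHA

variable {B : Type} [NormedRing B] [StarRing B] [CStarRing B] [NormedAlgebra ℂ B]
  [StarModule ℂ B] [FiniteDimensional ℂ B]

/-- The coproduct of the dual WHA `B̂`, dual to the multiplication of `B`. -/
def comulHat (W : WHA B) (φ : Module.Dual ℂ B) :
    Module.Dual ℂ B ⊗[ℂ] Module.Dual ℂ B :=
  (TensorProduct.dualDistribEquiv ℂ B B).symm ((LinearMap.mul' ℂ B).dualMap φ)

/-- The (convolution) multiplication of the dual WHA `B̂`: `⟨φψ, b⟩ = ⟨φ ⊗ ψ, Δ(b)⟩`. -/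
def mulHat (W : WHA B) :
    Module.Dual ℂ B →ₗ[ℂ] Module.Dual ℂ B →ₗ[ℂ] Module.Dual ℂ B :=
  (TensorProduct.mapBilinear (RingHom.id ℂ) B B ℂ ℂ).compr₂
    ((LinearMap.lcomp ℂ ℂ W.Δ) ∘ₗ
      (LinearMap.llcomp ℂ (B ⊗[ℂ] B) (ℂ ⊗[ℂ] ℂ) ℂ (TensorProduct.lid ℂ ℂ).toLinearMap))

/-- The counit of the dual WHA `B̂`: evaluation at `1`. -/
def counitHat : Module.Dual ℂ B →ₗ[ℂ] ℂ := LinearMap.applyₗ (R := ℂ) (1 : B)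

/-- The target counital map of the dual WHA: `ε̂_t(φ) = (ε̂ ⊗ id)(Δ̂(1̂)(φ ⊗ 1̂))`,
where `1̂ = ε` is the unit of `B̂`. -/
def εtHat (W : WHA B) (φ : Module.Dual ℂ B) : Module.Dual ℂ B :=
  (TensorProduct.lid ℂ (Module.Dual ℂ B))
    ((TensorProduct.map counitHat LinearMap.id)
      ((TensorProduct.map (W.mulHat.flip φ) (W.mulHat.flip W.ε)) (W.comulHat W.ε)))

/-- The source counital map of the dual WHA: `ε̂_s(φ) = (id ⊗ ε̂)((1̂ ⊗ φ)Δ̂(1̂))`. -/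
def εsHat (W : WHA B) (φ : Module.Dual ℂ B) : Module.Dual ℂ B :=
  (TensorProduct.rid ℂ (Module.Dual ℂ B))
    ((TensorProduct.map LinearMap.id counitHat)
      ((TensorProduct.map (W.mulHat W.ε) (W.mulHat φ)) (W.comulHat W.ε)))

/-- The subalgebra `B̂_t B̂_s` of `B̂` (the minimal WHA inside `B̂`), as the linear span of
products of elements of `B̂_t = ε̂_t(B̂)` and `B̂_s = ε̂_s(B̂)`. -/
def minHat (W : WHA B) : Submodule ℂ (Module.Dual ℂ B) :=
  Submodule.span ℂ
    {φ : Module.Dual ℂ B | ∃ u ∈ Submodule.span ℂ (Set.range W.εtHat),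
      ∃ v ∈ Submodule.span ℂ (Set.range W.εsHat), φ = W.mulHat u v}

/-- The right Sweedler arrow `b ⟵ φ = ⟨φ, b₍₁₎⟩ b₍₂₎`. -/
def arrL (W : WHA B) (b : B) (φ : Module.Dual ℂ B) : B :=
  (TensorProduct.lid ℂ B) ((TensorProduct.map φ LinearMap.id) (W.Δ b))

end WHA


set_option linter.unusedSectionVars false
set_option linter.dupNamespace false
set_option maxHeartbeats 1000000
set_option synthInstance.maxHeartbeats 1000000

namespace WHAProof


variable {B : Type} [NormedRing B] [StarRing B] [CStarRing B] [NormedAlgebra ℂ B]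
  [StarModule ℂ B] [FiniteDimensional ℂ B]

/-- scalar contraction of a 2-tensor against two functionals -/
def sc (φ ψ : B →ₗ[ℂ] ℂ) (t : B ⊗[ℂ] B) : ℂ :=
  (TensorProduct.lid ℂ ℂ) ((TensorProduct.map φ ψ) t)

lemma sc_tmul (φ ψ : B →ₗ[ℂ] ℂ) (a c : B) : sc φ ψ (a ⊗ₜ c) = φ a * ψ c := by
  simp [sc]

lemma map_id_mulLeft (b : B) (t : B ⊗[ℂ] B) :
    (TensorProduct.map LinearMap.id (LinearMap.mulLeft ℂ b)) t = ((1 : B) ⊗ₜ[ℂ] b) * t := by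
  induction t with
  | zero => simp
  | tmul x y => simp [Algebra.TensorProduct.tmul_mul_tmul]
  | add x y hx hy => simp [hx, hy, mul_add]

lemma map_id_mulRight (b : B) (t : B ⊗[ℂ] B) :
    (TensorProduct.map LinearMap.id (LinearMap.mulRight ℂ b)) t = t * ((1 : B) ⊗ₜ[ℂ] b) := by
  induction t with
  | zero => simp
  | tmul x y => simp [Algebra.TensorProduct.tmul_mul_tmul]
  | add x y hx hy => simp [hx, hy, add_mul]

lemma map_mulLeft_id (b : B) (t : B ⊗[ℂ] B) :
    (TensorProduct.map (LinearMap.mulLeft ℂ b) LinearMap.id) t = (b ⊗ₜ[ℂ] (1 : B)) * t := by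
  induction t with
  | zero => simp
  | tmul x y => simp [Algebra.TensorProduct.tmul_mul_tmul]
  | add x y hx hy => simp [hx, hy, mul_add]

lemma map_mulRight_id (b : B) (t : B ⊗[ℂ] B) :
    (TensorProduct.map (LinearMap.mulRight ℂ b) LinearMap.id) t = t * (b ⊗ₜ[ℂ] (1 : B)) := by
  induction t with
  | zero => simp
  | tmul x y => simp [Algebra.TensorProduct.tmul_mul_tmul]
  | add x y hx hy => simp [hx, hy, add_mul]

/-- pull a `B`-endomorphism out of a left contraction -/
lemma map_snd_out (φ : B →ₗ[ℂ] ℂ) (f : B →ₗ[ℂ] B) (t : B ⊗[ℂ] B) :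
    (TensorProduct.lid ℂ B) ((TensorProduct.map φ f) t) =
      f ((TensorProduct.lid ℂ B) ((TensorProduct.map φ LinearMap.id) t)) := by
  induction t with
  | zero => simp
  | tmul x y => simp
  | add x y hx hy => simp [hx, hy]

lemma map_fst_out (ψ : B →ₗ[ℂ] ℂ) (f : B →ₗ[ℂ] B) (t : B ⊗[ℂ] B) :
    (TensorProduct.rid ℂ B) ((TensorProduct.map f ψ) t) =
      f ((TensorProduct.rid ℂ B) ((TensorProduct.map LinearMap.id ψ) t)) := by
  induction t with
  | zero => simp
  | tmul x y => simp
  | add x y hx hy => simp [hx, hy]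

/-- a scalar functional applied to a left contraction gives the scalar contraction -/
lemma fun_lid_contract (φ : B →ₗ[ℂ] ℂ) (f : B →ₗ[ℂ] ℂ) (t : B ⊗[ℂ] B) :
    f ((TensorProduct.lid ℂ B) ((TensorProduct.map φ LinearMap.id) t)) = sc φ f t := by
  induction t with
  | zero => simp [sc]
  | tmul x y => simp [sc, mul_comm]
  | add x y hx hy => simp [sc] at hx hy ⊢; rw [hx, hy]

lemma fun_rid_contract (ψ : B →ₗ[ℂ] ℂ) (f : B →ₗ[ℂ] ℂ) (t : B ⊗[ℂ] B) :
    f ((TensorProduct.rid ℂ B) ((TensorProduct.map LinearMap.id ψ) t)) = sc f ψ t := by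
  induction t with
  | zero => simp [sc]
  | tmul x y => simp [sc, mul_comm]
  | add x y hx hy => simp [sc] at hx hy ⊢; rw [hx, hy]





variable {B : Type} [NormedRing B] [StarRing B] [CStarRing B] [NormedAlgebra ℂ B]
  [StarModule ℂ B] [FiniteDimensional ℂ B]

lemma tensorStar_add (t u : B ⊗[ℂ] B) :
    tensorStar B B (t + u) = tensorStar B B t + tensorStar B B u := by
  unfold tensorStar
  rw [← Finset.sum_add_distrib]
  refine Finset.sum_congr rfl fun p _ => ?_
  rw [map_add, Finsupp.add_apply, map_add, add_smul]

lemma tensorStar_smul (c : ℂ) (t : B ⊗[ℂ] B) :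
    tensorStar B B (c • t) = (starRingEnd ℂ) c • tensorStar B B t := by
  unfold tensorStar
  rw [Finset.smul_sum]
  refine Finset.sum_congr rfl fun p _ => ?_
  rw [map_smul, Finsupp.smul_apply, smul_eq_mul, map_mul, mul_smul]

lemma tensorStar_tmul (x y : B) :
    tensorStar B B (x ⊗ₜ[ℂ] y) = star x ⊗ₜ[ℂ] star y := by
  unfold tensorStar
  set bM := Module.Free.chooseBasis ℂ B
  have hx : star x = ∑ i, (starRingEnd ℂ) (bM.repr x i) • star (bM i) := by
    conv_lhs => rw [← bM.sum_repr x]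
    rw [star_sum]
    exact Finset.sum_congr rfl fun i _ => by rw [star_smul]; rfl
  have hy : star y = ∑ j, (starRingEnd ℂ) (bM.repr y j) • star (bM j) := by
    conv_lhs => rw [← bM.sum_repr y]
    rw [star_sum]
    exact Finset.sum_congr rfl fun j _ => by rw [star_smul]; rfl
  rw [hx, hy, sum_tmul]
  rw [Fintype.sum_prod_type]
  refine Finset.sum_congr rfl fun i _ => ?_
  rw [tmul_sum]
  refine Finset.sum_congr rfl fun j _ => ?_
  rw [Module.Basis.tensorProduct_repr_tmul_apply, TensorProduct.smul_tmul_smul, smul_eq_mul, map_mul,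
    mul_comm]

lemma tensorStar_tensorStar (t : B ⊗[ℂ] B) :
    tensorStar B B (tensorStar B B t) = t := by
  induction t with
  | zero =>
      have : tensorStar B B (0 : B ⊗[ℂ] B) = 0 := by
        have h := tensorStar_smul (B := B) 0 0
        simpa using h
      rw [this, this]
  | tmul x y => rw [tensorStar_tmul, tensorStar_tmul, star_star, star_star]
  | add x y hx hy => rw [tensorStar_add, tensorStar_add, hx, hy]

lemma tensorStar_zero : tensorStar B B (0 : B ⊗[ℂ] B) = 0 := by
  have h := tensorStar_smul (B := B) 0 0
  simpa using h

lemma tensorStar_mul (t u : B ⊗[ℂ] B) :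
    tensorStar B B (t * u) = tensorStar B B u * tensorStar B B t := by
  induction t with
  | zero => rw [zero_mul, tensorStar_zero, mul_zero]
  | tmul a b =>
      induction u with
      | zero => rw [mul_zero, tensorStar_zero, zero_mul]
      | tmul c d =>
          rw [Algebra.TensorProduct.tmul_mul_tmul, tensorStar_tmul, tensorStar_tmul,
            tensorStar_tmul, Algebra.TensorProduct.tmul_mul_tmul, star_mul, star_mul]
      | add c d hc hd =>
          rw [mul_add, tensorStar_add, hc, hd, tensorStar_add, add_mul]
  | add a b ha hb =>
      rw [add_mul, tensorStar_add, ha, hb, tensorStar_add, mul_add]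

/-- the conjugate of a linear endomorphism by the star operation -/
def conjMap (f : B →ₗ[ℂ] B) : B →ₗ[ℂ] B where
  toFun y := star (f (star y))
  map_add' x y := show star (f (star (x + y))) = _ by rw [star_add, map_add, star_add]
  map_smul' c x := show star (f (star (c • x))) = _ by
    rw [star_smul, map_smul, star_smul, star_star]; rfl

@[simp] lemma conjMap_apply (f : B →ₗ[ℂ] B) (y : B) : conjMap f y = star (f (star y)) := rfl

lemma conjMap_conjMap (f : B →ₗ[ℂ] B) : conjMap (conjMap f) = f := by
  ext y; simp

lemma conjMap_id : conjMap (LinearMap.id : B →ₗ[ℂ] B) = LinearMap.id := by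
  ext y; simp

/-- the conjugate of a linear functional by star -/
def dag (φ : B →ₗ[ℂ] ℂ) : B →ₗ[ℂ] ℂ where
  toFun y := (starRingEnd ℂ) (φ (star y))
  map_add' x y := show (starRingEnd ℂ) (φ (star (x + y))) = _ by rw [star_add, map_add, map_add]
  map_smul' c x := show (starRingEnd ℂ) (φ (star (c • x))) = _ by
    rw [star_smul, map_smul, smul_eq_mul, map_mul]; simp

@[simp] lemma dag_apply (φ : B →ₗ[ℂ] ℂ) (y : B) : dag φ y = (starRingEnd ℂ) (φ (star y)) := rfl

lemma dag_dag (φ : B →ₗ[ℂ] ℂ) : dag (dag φ) = φ := by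
  ext y; simp

lemma tensorStar_map (f g : B →ₗ[ℂ] B) (t : B ⊗[ℂ] B) :
    tensorStar B B ((TensorProduct.map f g) t) =
      (TensorProduct.map (conjMap f) (conjMap g)) (tensorStar B B t) := by
  induction t with
  | zero => rw [tensorStar_zero, map_zero, tensorStar_zero, map_zero]
  | tmul x y => rw [map_tmul, tensorStar_tmul, tensorStar_tmul, map_tmul]; simp
  | add x y hx hy => rw [map_add, tensorStar_add, tensorStar_add, map_add, hx, hy]

lemma sc_tensorStar (φ ψ : B →ₗ[ℂ] ℂ) (t : B ⊗[ℂ] B) :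
    sc φ ψ (tensorStar B B t) = (starRingEnd ℂ) (sc (dag φ) (dag ψ) t) := by
  induction t with
  | zero => rw [tensorStar_zero]; simp [sc]
  | tmul x y => rw [tensorStar_tmul]; simp [sc]
  | add x y hx hy => rw [tensorStar_add]; simp only [sc, map_add] at hx hy ⊢; rw [hx, hy]

lemma star_lid_contract (φ : B →ₗ[ℂ] ℂ) (t : B ⊗[ℂ] B) :
    star ((TensorProduct.lid ℂ B) ((TensorProduct.map φ LinearMap.id) t)) =
      (TensorProduct.lid ℂ B) ((TensorProduct.map (dag φ) LinearMap.id) (tensorStar B B t)) := by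
  induction t with
  | zero => rw [tensorStar_zero]; simp
  | tmul x y => rw [tensorStar_tmul]; simp [star_smul]
  | add x y hx hy => rw [tensorStar_add]; simp only [map_add, star_add] at hx hy ⊢; rw [hx, hy]

lemma star_rid_contract (ψ : B →ₗ[ℂ] ℂ) (t : B ⊗[ℂ] B) :
    star ((TensorProduct.rid ℂ B) ((TensorProduct.map LinearMap.id ψ) t)) =
      (TensorProduct.rid ℂ B) ((TensorProduct.map LinearMap.id (dag ψ)) (tensorStar B B t)) := by
  induction t with
  | zero => rw [tensorStar_zero]; simp
  | tmul x y => rw [tensorStar_tmul]; simp [star_smul]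
  | add x y hx hy => rw [tensorStar_add]; simp only [map_add, star_add] at hx hy ⊢; rw [hx, hy]





variable {B : Type} [NormedRing B] [StarRing B] [CStarRing B] [NormedAlgebra ℂ B]
  [StarModule ℂ B] [FiniteDimensional ℂ B] (W : WHA B)

/-- `y ↦ (ε ⊗ id)((y ⊗ 1) t)` -/
def rhoAux (t : B ⊗[ℂ] B) : B →ₗ[ℂ] B :=
  (TensorProduct.lid ℂ B).toLinearMap ∘ₗ TensorProduct.map W.ε LinearMap.id ∘ₗ
    LinearMap.mulRight ℂ t ∘ₗ (TensorProduct.mk ℂ B B).flip 1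

lemma rhoAux_apply (t : B ⊗[ℂ] B) (y : B) :
    rhoAux W t y = (TensorProduct.lid ℂ B)
      ((TensorProduct.map W.ε LinearMap.id) ((y ⊗ₜ[ℂ] (1 : B)) * t)) := rfl

lemma rhoAux_add (t u : B ⊗[ℂ] B) : rhoAux W (t + u) = rhoAux W t + rhoAux W u := by
  ext y; simp [rhoAux_apply, mul_add]

lemma rhoAux_zero : rhoAux W (0 : B ⊗[ℂ] B) = 0 := by
  ext y; simp [rhoAux_apply]

/-- `y ↦ (id ⊗ ε)(t (1 ⊗ y))` -/
def lamAux (t : B ⊗[ℂ] B) : B →ₗ[ℂ] B :=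
  (TensorProduct.rid ℂ B).toLinearMap ∘ₗ TensorProduct.map LinearMap.id W.ε ∘ₗ
    LinearMap.mulLeft ℂ t ∘ₗ TensorProduct.mk ℂ B B 1

lemma lamAux_apply (t : B ⊗[ℂ] B) (y : B) :
    lamAux W t y = (TensorProduct.rid ℂ B)
      ((TensorProduct.map LinearMap.id W.ε) (t * ((1 : B) ⊗ₜ[ℂ] y))) := rfl

lemma lamAux_add (t u : B ⊗[ℂ] B) : lamAux W (t + u) = lamAux W t + lamAux W u := by
  ext y; simp [lamAux_apply, add_mul]

lemma lamAux_zero : lamAux W (0 : B ⊗[ℂ] B) = 0 := by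
  ext y; simp [lamAux_apply]

/-- `y ↦ (ε ⊗ id)(t (y ⊗ 1))` -/
def etAux (t : B ⊗[ℂ] B) : B →ₗ[ℂ] B :=
  (TensorProduct.lid ℂ B).toLinearMap ∘ₗ TensorProduct.map W.ε LinearMap.id ∘ₗ
    LinearMap.mulLeft ℂ t ∘ₗ (TensorProduct.mk ℂ B B).flip 1

lemma etAux_apply (t : B ⊗[ℂ] B) (y : B) :
    etAux W t y = (TensorProduct.lid ℂ B)
      ((TensorProduct.map W.ε LinearMap.id) (t * (y ⊗ₜ[ℂ] (1 : B)))) := rfl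

/-- `y ↦ (id ⊗ ε)((1 ⊗ y) t)` -/
def esAux (t : B ⊗[ℂ] B) : B →ₗ[ℂ] B :=
  (TensorProduct.rid ℂ B).toLinearMap ∘ₗ TensorProduct.map LinearMap.id W.ε ∘ₗ
    LinearMap.mulRight ℂ t ∘ₗ TensorProduct.mk ℂ B B 1

lemma esAux_apply (t : B ⊗[ℂ] B) (y : B) :
    esAux W t y = (TensorProduct.rid ℂ B)
      ((TensorProduct.map LinearMap.id W.ε) (((1 : B) ⊗ₜ[ℂ] y) * t)) := rfl

/-- the source counital map as a linear map -/
def epsS : B →ₗ[ℂ] B := esAux W (W.Δ 1)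

/-- the target counital map as a linear map -/
def epsT : B →ₗ[ℂ] B := etAux W (W.Δ 1)

/-- `ρ` -/
def epsR : B →ₗ[ℂ] B := rhoAux W (W.Δ 1)

/-- `λ` -/
def epsL : B →ₗ[ℂ] B := lamAux W (W.Δ 1)

lemma epsT_apply (y : B) : epsT W y = W.εt y := rfl

lemma epsS_apply (y : B) : epsS W y = W.εs y := rfl

/-- `z ↦ (id ⊗ ε)(s z)` -/
def fAux (s : B ⊗[ℂ] B) : B ⊗[ℂ] B →ₗ[ℂ] B :=
  (TensorProduct.rid ℂ B).toLinearMap ∘ₗ TensorProduct.map LinearMap.id W.ε ∘ₗ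
    LinearMap.mulLeft ℂ s

lemma fAux_apply (s z : B ⊗[ℂ] B) :
    fAux W s z = (TensorProduct.rid ℂ B)
      ((TensorProduct.map LinearMap.id W.ε) (s * z)) := rfl

lemma fAux_add (s u : B ⊗[ℂ] B) : fAux W (s + u) = fAux W s + fAux W u := by
  ext z; simp [fAux_apply, add_mul]

lemma fAux_zero : fAux W (0 : B ⊗[ℂ] B) = 0 := by
  ext z; simp [fAux_apply]

/-- `z ↦ (ε ⊗ id)(z s)` -/
def qAux (s : B ⊗[ℂ] B) : B ⊗[ℂ] B →ₗ[ℂ] B :=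
  (TensorProduct.lid ℂ B).toLinearMap ∘ₗ TensorProduct.map W.ε LinearMap.id ∘ₗ
    LinearMap.mulRight ℂ s

lemma qAux_apply (s z : B ⊗[ℂ] B) :
    qAux W s z = (TensorProduct.lid ℂ B)
      ((TensorProduct.map W.ε LinearMap.id) (z * s)) := rfl

/-- Key induction lemma A. -/
lemma keyA (s t₁ t₂ : B ⊗[ℂ] B) :
    (TensorProduct.map LinearMap.id (rhoAux W t₂)) (s * t₁) =
      (TensorProduct.map (fAux W s) LinearMap.id)
        ((t₁ ⊗ₜ[ℂ] (1 : B)) * ((TensorProduct.assoc ℂ B B B).symm ((1 : B) ⊗ₜ[ℂ] t₂))) := by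
  induction s with
  | zero =>
      rw [zero_mul, map_zero, fAux_zero, TensorProduct.map_zero_left, LinearMap.zero_apply]
  | add a b ha hb =>
      rw [add_mul, map_add, ha, hb, fAux_add, TensorProduct.map_add_left, LinearMap.add_apply]
  | tmul u v =>
      induction t₁ with
      | zero => rw [mul_zero, map_zero, zero_tmul, zero_mul, map_zero]
      | add p q hp hq =>
          rw [mul_add, map_add, hp, hq, add_tmul, add_mul, map_add]
      | tmul p q =>
          induction t₂ with
          | zero =>
              rw [rhoAux_zero, TensorProduct.map_zero_right, LinearMap.zero_apply, tmul_zero,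
                LinearEquiv.map_zero, mul_zero, map_zero]
          | add r w hr hw =>
              rw [rhoAux_add, TensorProduct.map_add_right, LinearMap.add_apply, hr, hw,
                tmul_add, map_add, mul_add, map_add]
          | tmul r w =>
              rw [Algebra.TensorProduct.tmul_mul_tmul, TensorProduct.map_tmul,
                TensorProduct.assoc_symm_tmul, Algebra.TensorProduct.tmul_mul_tmul,
                Algebra.TensorProduct.tmul_mul_tmul, TensorProduct.map_tmul,
                rhoAux_apply, Algebra.TensorProduct.tmul_mul_tmul, fAux_apply,
                Algebra.TensorProduct.tmul_mul_tmul]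
              simp [mul_assoc, TensorProduct.smul_tmul, tmul_smul]

/-- Key induction lemma B. -/
lemma keyB (s t₁ t₂ : B ⊗[ℂ] B) :
    (TensorProduct.map (lamAux W t₂) LinearMap.id) (t₁ * s) =
      (TensorProduct.map LinearMap.id (qAux W s))
        ((TensorProduct.assoc ℂ B B B)
          ((t₂ ⊗ₜ[ℂ] (1 : B)) * ((TensorProduct.assoc ℂ B B B).symm ((1 : B) ⊗ₜ[ℂ] t₁)))) := by
  induction s with
  | zero =>
      have hq : qAux W (0 : B ⊗[ℂ] B) = 0 := by ext z; simp [qAux_apply]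
      rw [mul_zero, map_zero, hq, TensorProduct.map_zero_right, LinearMap.zero_apply]
  | add a b ha hb =>
      have hq : qAux W (a + b) = qAux W a + qAux W b := by ext z; simp [qAux_apply, mul_add]
      rw [mul_add, map_add, ha, hb, hq, TensorProduct.map_add_right, LinearMap.add_apply]
  | tmul u v =>
      induction t₁ with
      | zero =>
          rw [zero_mul, map_zero, tmul_zero, LinearEquiv.map_zero, mul_zero,
            LinearEquiv.map_zero, map_zero]
      | add p q hp hq =>
          rw [add_mul, map_add, hp, hq, tmul_add, LinearEquiv.map_add, mul_add,
            LinearEquiv.map_add, map_add]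
      | tmul p q =>
          induction t₂ with
          | zero =>
              rw [lamAux_zero, TensorProduct.map_zero_left, LinearMap.zero_apply, zero_tmul,
                zero_mul, LinearEquiv.map_zero, map_zero]
          | add r w hr hw =>
              rw [lamAux_add, TensorProduct.map_add_left, LinearMap.add_apply, hr, hw,
                add_tmul, add_mul, map_add, map_add]
          | tmul r w =>
              rw [Algebra.TensorProduct.tmul_mul_tmul, TensorProduct.map_tmul,
                TensorProduct.assoc_symm_tmul, Algebra.TensorProduct.tmul_mul_tmul,
                Algebra.TensorProduct.tmul_mul_tmul, TensorProduct.assoc_tmul,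
                TensorProduct.map_tmul, lamAux_apply, Algebra.TensorProduct.tmul_mul_tmul,
                qAux_apply, Algebra.TensorProduct.tmul_mul_tmul]
              simp [mul_assoc, TensorProduct.smul_tmul, tmul_smul]

lemma collapseA (x : B) (w : B ⊗[ℂ] B) :
    (TensorProduct.map (fAux W (W.Δ x)) LinearMap.id)
      ((TensorProduct.map W.Δ LinearMap.id) w) = (x ⊗ₜ[ℂ] (1 : B)) * w := by
  induction w with
  | zero => simp
  | add p q hp hq => rw [map_add, map_add, hp, hq, mul_add]
  | tmul p q =>
      rw [TensorProduct.map_tmul, TensorProduct.map_tmul, fAux_apply, ← W.comul_mul,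
        Algebra.TensorProduct.tmul_mul_tmul, W.counit_right, one_mul]
      rfl

lemma collapseB (x : B) (w : B ⊗[ℂ] B) :
    (TensorProduct.map LinearMap.id (qAux W (W.Δ x)))
      ((TensorProduct.map LinearMap.id W.Δ) w) = w * ((1 : B) ⊗ₜ[ℂ] x) := by
  induction w with
  | zero => simp
  | add p q hp hq => rw [map_add, map_add, hp, hq, add_mul]
  | tmul p q =>
      rw [TensorProduct.map_tmul, TensorProduct.map_tmul, qAux_apply, ← W.comul_mul,
        Algebra.TensorProduct.tmul_mul_tmul, W.counit_left, mul_one]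
      rfl

/-- `(id ⊗ ρ)(Δ x) = (x ⊗ 1) Δ1` -/
lemma rhoK2R (x : B) :
    (TensorProduct.map LinearMap.id (epsR W)) (W.Δ x) = (x ⊗ₜ[ℂ] (1 : B)) * W.Δ 1 := by
  have h1 : W.Δ x = W.Δ x * W.Δ 1 := by rw [← W.comul_mul, mul_one]
  calc (TensorProduct.map LinearMap.id (epsR W)) (W.Δ x)
      = (TensorProduct.map LinearMap.id (rhoAux W (W.Δ 1))) (W.Δ x * W.Δ 1) := by
        rw [← h1]; rfl
    _ = (TensorProduct.map (fAux W (W.Δ x)) LinearMap.id)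
        ((W.Δ 1 ⊗ₜ[ℂ] (1 : B)) * ((TensorProduct.assoc ℂ B B B).symm ((1 : B) ⊗ₜ[ℂ] W.Δ 1))) :=
        keyA W _ _ _
    _ = (TensorProduct.map (fAux W (W.Δ x)) LinearMap.id)
        ((TensorProduct.map W.Δ LinearMap.id) (W.Δ 1)) := by rw [← W.weak_comul_one]
    _ = (x ⊗ₜ[ℂ] (1 : B)) * W.Δ 1 := collapseA W x _

/-- `(λ ⊗ id)(Δ x) = Δ1 (1 ⊗ x)` -/
lemma lamK2 (x : B) :
    (TensorProduct.map (epsL W) LinearMap.id) (W.Δ x) = W.Δ 1 * ((1 : B) ⊗ₜ[ℂ] x) := by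
  have h1 : W.Δ x = W.Δ 1 * W.Δ x := by rw [← W.comul_mul, one_mul]
  calc (TensorProduct.map (epsL W) LinearMap.id) (W.Δ x)
      = (TensorProduct.map (lamAux W (W.Δ 1)) LinearMap.id) (W.Δ 1 * W.Δ x) := by
        rw [← h1]; rfl
    _ = (TensorProduct.map LinearMap.id (qAux W (W.Δ x)))
        ((TensorProduct.assoc ℂ B B B)
          ((W.Δ 1 ⊗ₜ[ℂ] (1 : B)) *
            ((TensorProduct.assoc ℂ B B B).symm ((1 : B) ⊗ₜ[ℂ] W.Δ 1)))) := keyB W _ _ _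
    _ = (TensorProduct.map LinearMap.id (qAux W (W.Δ x)))
        ((TensorProduct.assoc ℂ B B B) ((TensorProduct.map W.Δ LinearMap.id) (W.Δ 1))) := by
        rw [← W.weak_comul_one]
    _ = (TensorProduct.map LinearMap.id (qAux W (W.Δ x)))
        ((TensorProduct.map LinearMap.id W.Δ) (W.Δ 1)) := by rw [W.coassoc 1]
    _ = W.Δ 1 * ((1 : B) ⊗ₜ[ℂ] x) := collapseB W x _





variable {B : Type} [NormedRing B] [StarRing B] [CStarRing B] [NormedAlgebra ℂ B]
  [StarModule ℂ B] [FiniteDimensional ℂ B] (W : WHA B)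

lemma map_fst_comp (φ : B →ₗ[ℂ] ℂ) (f : B →ₗ[ℂ] B) (t : B ⊗[ℂ] B) :
    (TensorProduct.map (φ ∘ₗ f) LinearMap.id) t =
      (TensorProduct.map φ LinearMap.id) ((TensorProduct.map f LinearMap.id) t) := by
  induction t with
  | zero => simp
  | tmul x y => simp
  | add x y hx hy => simp [hx, hy]

lemma map_snd_comp (ψ : B →ₗ[ℂ] ℂ) (f : B →ₗ[ℂ] B) (t : B ⊗[ℂ] B) :
    (TensorProduct.map LinearMap.id (ψ ∘ₗ f)) t =
      (TensorProduct.map LinearMap.id ψ) ((TensorProduct.map LinearMap.id f) t) := by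
  induction t with
  | zero => simp
  | tmul x y => simp
  | add x y hx hy => simp [hx, hy]

lemma mapB_fst_comp (g f : B →ₗ[ℂ] B) (t : B ⊗[ℂ] B) :
    (TensorProduct.map (g ∘ₗ f) LinearMap.id) t =
      (TensorProduct.map g LinearMap.id) ((TensorProduct.map f LinearMap.id) t) := by
  induction t with
  | zero => simp
  | tmul x y => simp
  | add x y hx hy => simp [hx, hy]

lemma mapB_snd_comp (g f : B →ₗ[ℂ] B) (t : B ⊗[ℂ] B) :
    (TensorProduct.map LinearMap.id (g ∘ₗ f)) t =
      (TensorProduct.map LinearMap.id g) ((TensorProduct.map LinearMap.id f) t) := by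
  induction t with
  | zero => simp
  | tmul x y => simp
  | add x y hx hy => simp [hx, hy]

lemma map_split (φ : B →ₗ[ℂ] ℂ) (g : B →ₗ[ℂ] B) (t : B ⊗[ℂ] B) :
    (TensorProduct.map φ g) t =
      (TensorProduct.map φ LinearMap.id) ((TensorProduct.map LinearMap.id g) t) := by
  induction t with
  | zero => simp
  | tmul x y => simp
  | add x y hx hy => simp [hx, hy]

lemma map_split' (ψ : B →ₗ[ℂ] ℂ) (g : B →ₗ[ℂ] B) (t : B ⊗[ℂ] B) :
    (TensorProduct.map g ψ) t =
      (TensorProduct.map LinearMap.id ψ) ((TensorProduct.map g LinearMap.id) t) := by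
  induction t with
  | zero => simp
  | tmul x y => simp
  | add x y hx hy => simp [hx, hy]

lemma mapB_split (f g : B →ₗ[ℂ] B) (t : B ⊗[ℂ] B) :
    (TensorProduct.map f g) t =
      (TensorProduct.map f LinearMap.id) ((TensorProduct.map LinearMap.id g) t) := by
  induction t with
  | zero => simp
  | tmul x y => simp
  | add x y hx hy => simp [hx, hy]

lemma comul_one_star : tensorStar B B (W.Δ 1) = W.Δ 1 := by
  have h := W.comul_star 1
  rw [star_one] at h
  exact h.symm

/-- useful rewrites for the four counital-type maps -/
lemma epsR_eq (y : B) :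
    epsR W y = (TensorProduct.lid ℂ B)
      ((TensorProduct.map (W.ε ∘ₗ LinearMap.mulLeft ℂ y) LinearMap.id) (W.Δ 1)) := by
  rw [epsR, rhoAux_apply, ← map_mulLeft_id, ← map_fst_comp]

lemma epsT_eq (y : B) :
    epsT W y = (TensorProduct.lid ℂ B)
      ((TensorProduct.map (W.ε ∘ₗ LinearMap.mulRight ℂ y) LinearMap.id) (W.Δ 1)) := by
  rw [epsT, etAux_apply, ← map_mulRight_id, ← map_fst_comp]

lemma epsS_eq (y : B) :
    epsS W y = (TensorProduct.rid ℂ B)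
      ((TensorProduct.map LinearMap.id (W.ε ∘ₗ LinearMap.mulLeft ℂ y)) (W.Δ 1)) := by
  rw [epsS, esAux_apply, ← map_id_mulLeft, ← map_snd_comp]

lemma epsL_eq (y : B) :
    epsL W y = (TensorProduct.rid ℂ B)
      ((TensorProduct.map LinearMap.id (W.ε ∘ₗ LinearMap.mulRight ℂ y)) (W.Δ 1)) := by
  rw [epsL, lamAux_apply, ← map_id_mulRight, ← map_snd_comp]

/-- the counit is a `*`-map -/
lemma eps_star (x : B) : W.ε (star x) = (starRingEnd ℂ) (W.ε x) := by
  have h1 : ∀ z : B, (TensorProduct.rid ℂ B)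
      ((TensorProduct.map LinearMap.id (dag W.ε)) (W.Δ z)) = z := by
    intro z
    calc (TensorProduct.rid ℂ B) ((TensorProduct.map LinearMap.id (dag W.ε)) (W.Δ z))
        = (TensorProduct.rid ℂ B) ((TensorProduct.map LinearMap.id (dag W.ε))
            (tensorStar B B (tensorStar B B (W.Δ z)))) := by rw [tensorStar_tensorStar]
      _ = star ((TensorProduct.rid ℂ B) ((TensorProduct.map LinearMap.id W.ε)
            (tensorStar B B (W.Δ z)))) := (star_rid_contract _ _).symm
      _ = star ((TensorProduct.rid ℂ B) ((TensorProduct.map LinearMap.id W.ε)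
            (W.Δ (star z)))) := by rw [← W.comul_star]
      _ = star (star z) := by rw [W.counit_right]
      _ = z := star_star z
  have h2 : ∀ z : B, W.ε z = dag W.ε z := by
    intro z
    calc W.ε z = W.ε ((TensorProduct.rid ℂ B)
          ((TensorProduct.map LinearMap.id (dag W.ε)) (W.Δ z))) := by rw [h1]
      _ = sc W.ε (dag W.ε) (W.Δ z) := fun_rid_contract _ _ _
      _ = dag W.ε ((TensorProduct.lid ℂ B)
          ((TensorProduct.map W.ε LinearMap.id) (W.Δ z))) := (fun_lid_contract _ _ _).symm
      _ = dag W.ε z := by rw [W.counit_left]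
  have h3 := h2 (star x)
  rw [dag_apply, star_star] at h3
  exact h3

lemma conjMap_epsT : conjMap (epsT W) = epsR W := by
  ext y
  have hdag : dag (W.ε ∘ₗ LinearMap.mulRight ℂ (star y)) = W.ε ∘ₗ LinearMap.mulLeft ℂ y := by
    ext w
    simp only [dag_apply, LinearMap.coe_comp, Function.comp_apply, LinearMap.mulRight_apply,
      LinearMap.mulLeft_apply]
    rw [← star_mul, eps_star, Complex.conj_conj]
  rw [conjMap_apply, epsT_eq, star_lid_contract, comul_one_star, hdag, ← epsR_eq]

lemma conjMap_epsR : conjMap (epsR W) = epsT W := by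
  rw [← conjMap_epsT, conjMap_conjMap]

lemma conjMap_epsL : conjMap (epsL W) = epsS W := by
  ext y
  have hdag : dag (W.ε ∘ₗ LinearMap.mulRight ℂ (star y)) = W.ε ∘ₗ LinearMap.mulLeft ℂ y := by
    ext w
    simp only [dag_apply, LinearMap.coe_comp, Function.comp_apply, LinearMap.mulRight_apply,
      LinearMap.mulLeft_apply]
    rw [← star_mul, eps_star, Complex.conj_conj]
  rw [conjMap_apply, epsL_eq, star_rid_contract, comul_one_star, hdag, ← epsS_eq]

/-- K2 : `(ε_s ⊗ id) Δ x = (1 ⊗ x) Δ1` -/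
lemma K2 (x : B) :
    (TensorProduct.map (epsS W) LinearMap.id) (W.Δ x) = ((1 : B) ⊗ₜ[ℂ] x) * W.Δ 1 := by
  have h := lamK2 W (star x)
  have h' := congrArg (tensorStar B B) h
  rw [tensorStar_map, conjMap_epsL, conjMap_id, ← W.comul_star, star_star,
    tensorStar_mul, tensorStar_tmul, star_one, star_star, comul_one_star] at h'
  exact h'

/-- K1'' : `(id ⊗ ε_t) Δ x = Δ1 (x ⊗ 1)` -/
lemma K1'' (x : B) :
    (TensorProduct.map LinearMap.id (epsT W)) (W.Δ x) = W.Δ 1 * (x ⊗ₜ[ℂ] (1 : B)) := by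
  have h := rhoK2R W (star x)
  have h' := congrArg (tensorStar B B) h
  rw [tensorStar_map, conjMap_epsR, conjMap_id, ← W.comul_star, star_star,
    tensorStar_mul, tensorStar_tmul, star_one, star_star, comul_one_star] at h'
  exact h'

/-- K3 : `(id ⊗ ε_t) Δ1 = Δ1` -/
lemma K3 : (TensorProduct.map LinearMap.id (epsT W)) (W.Δ 1) = W.Δ 1 := by
  have h := K1'' W 1
  rwa [← Algebra.TensorProduct.one_def, mul_one] at h

lemma wc1 (b d : B) :
    sc (W.ε ∘ₗ LinearMap.mulLeft ℂ b) (W.ε ∘ₗ LinearMap.mulRight ℂ d) (W.Δ 1) =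
      W.ε (b * d) := by
  have h := W.weak_counit b 1 d
  rw [mul_one] at h
  exact h

lemma wc2 (y a : B) :
    sc (W.ε ∘ₗ LinearMap.mulRight ℂ a) (W.ε ∘ₗ LinearMap.mulLeft ℂ y) (W.Δ 1) =
      W.ε (y * a) := by
  have hd1 : dag (W.ε ∘ₗ LinearMap.mulRight ℂ a) = W.ε ∘ₗ LinearMap.mulLeft ℂ (star a) := by
    ext w
    simp only [dag_apply, LinearMap.coe_comp, Function.comp_apply, LinearMap.mulRight_apply,
      LinearMap.mulLeft_apply]
    have hh : star w * a = star (star a * w) := by rw [star_mul, star_star]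
    rw [hh, eps_star, Complex.conj_conj]
  have hd2 : dag (W.ε ∘ₗ LinearMap.mulLeft ℂ y) = W.ε ∘ₗ LinearMap.mulRight ℂ (star y) := by
    ext w
    simp only [dag_apply, LinearMap.coe_comp, Function.comp_apply, LinearMap.mulRight_apply,
      LinearMap.mulLeft_apply]
    have hh : y * star w = star (w * star y) := by rw [star_mul, star_star]
    rw [hh, eps_star, Complex.conj_conj]
  calc sc (W.ε ∘ₗ LinearMap.mulRight ℂ a) (W.ε ∘ₗ LinearMap.mulLeft ℂ y) (W.Δ 1)
      = sc (W.ε ∘ₗ LinearMap.mulRight ℂ a) (W.ε ∘ₗ LinearMap.mulLeft ℂ y)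
          (tensorStar B B (W.Δ 1)) := by rw [comul_one_star]
    _ = (starRingEnd ℂ) (sc (dag (W.ε ∘ₗ LinearMap.mulRight ℂ a))
          (dag (W.ε ∘ₗ LinearMap.mulLeft ℂ y)) (W.Δ 1)) := sc_tensorStar _ _ _
    _ = (starRingEnd ℂ) (W.ε (star a * star y)) := by rw [hd1, hd2, wc1]
    _ = W.ε (star (star a * star y)) := by rw [eps_star]
    _ = W.ε (y * a) := by rw [star_mul, star_star, star_star]

lemma eps_epsS_mul (y a : B) : W.ε (epsS W y * a) = W.ε (y * a) := by
  have h1 : W.ε (epsS W y * a) = (W.ε ∘ₗ LinearMap.mulRight ℂ a) (epsS W y) := rfl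
  rw [h1, epsS_eq, fun_rid_contract, wc2]

lemma eps_epsR_mul (y x : B) : W.ε (epsR W y * x) = W.ε (y * x) := by
  have h1 : W.ε (epsR W y * x) = (W.ε ∘ₗ LinearMap.mulRight ℂ x) (epsR W y) := rfl
  rw [h1, epsR_eq, fun_lid_contract]
  have h2 : sc (W.ε ∘ₗ LinearMap.mulLeft ℂ y) (W.ε ∘ₗ LinearMap.mulRight ℂ x) (W.Δ 1) =
      W.ε (y * x) := wc1 W y x
  exact h2

lemma epsR_epsS : epsR W ∘ₗ epsS W = epsR W := by
  ext y
  have hfun : W.ε ∘ₗ LinearMap.mulLeft ℂ (epsS W y) = W.ε ∘ₗ LinearMap.mulLeft ℂ y := by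
    ext a
    simp only [LinearMap.coe_comp, Function.comp_apply, LinearMap.mulLeft_apply]
    exact eps_epsS_mul W y a
  simp only [LinearMap.coe_comp, Function.comp_apply]
  rw [epsR_eq, hfun, ← epsR_eq]

lemma epsT_epsR : epsT W ∘ₗ epsR W = epsR W := by
  ext y
  simp only [LinearMap.coe_comp, Function.comp_apply]
  rw [epsR_eq, ← map_snd_out, map_split, K3, ← epsR_eq]

/-- ρK1 : `(ρ ⊗ id) Δ x = Σ ρ(1₍₁₎) ⊗ x·1₍₂₎` -/
lemma rhoK1 (x : B) :
    (TensorProduct.map (epsR W) LinearMap.id) (W.Δ x) =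
      (TensorProduct.map (epsR W) (LinearMap.mulLeft ℂ x)) (W.Δ 1) := by
  calc (TensorProduct.map (epsR W) LinearMap.id) (W.Δ x)
      = (TensorProduct.map (epsR W ∘ₗ epsS W) LinearMap.id) (W.Δ x) := by rw [epsR_epsS]
    _ = (TensorProduct.map (epsR W) LinearMap.id)
        ((TensorProduct.map (epsS W) LinearMap.id) (W.Δ x)) := mapB_fst_comp _ _ _
    _ = (TensorProduct.map (epsR W) LinearMap.id)
        ((TensorProduct.map LinearMap.id (LinearMap.mulLeft ℂ x)) (W.Δ 1)) := by
        rw [K2, map_id_mulLeft]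
    _ = (TensorProduct.map (epsR W) (LinearMap.mulLeft ℂ x)) (W.Δ 1) := by
        rw [← mapB_split]





variable {B : Type} [NormedRing B] [StarRing B] [CStarRing B] [NormedAlgebra ℂ B]
  [StarModule ℂ B] [FiniteDimensional ℂ B] (W : WHA B)

lemma mulHat_apply (φ ψ : Module.Dual ℂ B) (b : B) : W.mulHat φ ψ b = sc φ ψ (W.Δ b) := rfl

lemma counitHat_apply (φ : Module.Dual ℂ B) : WHA.counitHat φ = φ (1 : B) := rfl

lemma arrL_eq (b : B) (φ : Module.Dual ℂ B) : W.arrL b φ =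
    (TensorProduct.lid ℂ B) ((TensorProduct.map φ LinearMap.id) (W.Δ b)) := rfl

lemma mulHat_eps_right (φ : Module.Dual ℂ B) : W.mulHat φ W.ε = φ := by
  ext b
  rw [mulHat_apply, ← fun_rid_contract, W.counit_right]

lemma mulHat_eps_left (φ : Module.Dual ℂ B) : W.mulHat W.ε φ = φ := by
  ext b
  rw [mulHat_apply, ← fun_lid_contract, W.counit_left]

lemma dualDistrib_comulHat :
    TensorProduct.dualDistrib ℂ B B (W.comulHat W.ε) = (LinearMap.mul' ℂ B).dualMap W.ε := by
  rw [WHA.comulHat]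
  exact (TensorProduct.dualDistribEquiv ℂ B B).apply_symm_apply _

lemma etHat_aux (φ : Module.Dual ℂ B) (b : B) (u : Module.Dual ℂ B ⊗[ℂ] Module.Dual ℂ B) :
    ((TensorProduct.lid ℂ (Module.Dual ℂ B))
      ((TensorProduct.map WHA.counitHat LinearMap.id)
        ((TensorProduct.map (W.mulHat.flip φ) (W.mulHat.flip W.ε)) u))) b =
    (TensorProduct.dualDistrib ℂ B B u)
      (((TensorProduct.rid ℂ B) ((TensorProduct.map LinearMap.id φ) (W.Δ 1))) ⊗ₜ[ℂ] b) := by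
  induction u with
  | zero => rw [map_zero, map_zero, LinearEquiv.map_zero, map_zero]; rfl
  | add x y hx hy => simp only [map_add, LinearMap.add_apply] at hx hy ⊢; rw [hx, hy]
  | tmul α β =>
      simp only [TensorProduct.map_tmul, TensorProduct.lid_tmul, LinearMap.flip_apply,
        LinearMap.id_coe, id_eq, LinearMap.smul_apply, TensorProduct.dualDistrib_apply]
      rw [counitHat_apply, mulHat_apply, mulHat_eps_right]
      rw [smul_eq_mul]
      congr 1
      rw [← fun_rid_contract]

lemma etHat_eq (φ : Module.Dual ℂ B) : W.εtHat φ = φ ∘ₗ epsT W := by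
  ext b
  have h := etHat_aux W φ b (W.comulHat W.ε)
  rw [WHA.εtHat, h, dualDistrib_comulHat, LinearMap.dualMap_apply, LinearMap.mul'_apply]
  have h1 : W.ε ((TensorProduct.rid ℂ B) ((TensorProduct.map LinearMap.id φ) (W.Δ 1)) * b) =
      (W.ε ∘ₗ LinearMap.mulRight ℂ b)
        ((TensorProduct.rid ℂ B) ((TensorProduct.map LinearMap.id φ) (W.Δ 1))) := rfl
  rw [h1, fun_rid_contract]
  have h2 : (φ ∘ₗ epsT W) b = φ (epsT W b) := rfl
  rw [h2, epsT_eq, fun_lid_contract]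

lemma esHat_aux (φ : Module.Dual ℂ B) (b : B) (u : Module.Dual ℂ B ⊗[ℂ] Module.Dual ℂ B) :
    ((TensorProduct.rid ℂ (Module.Dual ℂ B))
      ((TensorProduct.map LinearMap.id WHA.counitHat)
        ((TensorProduct.map (W.mulHat W.ε) (W.mulHat φ)) u))) b =
    (TensorProduct.dualDistrib ℂ B B u)
      (b ⊗ₜ[ℂ] ((TensorProduct.lid ℂ B) ((TensorProduct.map φ LinearMap.id) (W.Δ 1)))) := by
  induction u with
  | zero => rw [map_zero, map_zero, LinearEquiv.map_zero, map_zero]; rfl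
  | add x y hx hy => simp only [map_add, LinearMap.add_apply] at hx hy ⊢; rw [hx, hy]
  | tmul α β =>
      simp only [TensorProduct.map_tmul, TensorProduct.rid_tmul, LinearMap.id_coe, id_eq,
        LinearMap.smul_apply, TensorProduct.dualDistrib_apply]
      rw [counitHat_apply, mulHat_apply, mulHat_eps_left]
      rw [smul_eq_mul, mul_comm]
      congr 1
      rw [← fun_lid_contract]

lemma esHat_eq (φ : Module.Dual ℂ B) : W.εsHat φ = φ ∘ₗ epsS W := by
  ext b
  have h := esHat_aux W φ b (W.comulHat W.ε)
  rw [WHA.εsHat, h, dualDistrib_comulHat, LinearMap.dualMap_apply, LinearMap.mul'_apply]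
  have h1 : W.ε (b * (TensorProduct.lid ℂ B) ((TensorProduct.map φ LinearMap.id) (W.Δ 1))) =
      (W.ε ∘ₗ LinearMap.mulLeft ℂ b)
        ((TensorProduct.lid ℂ B) ((TensorProduct.map φ LinearMap.id) (W.Δ 1))) := rfl
  rw [h1, fun_lid_contract]
  have h2 : (φ ∘ₗ epsS W) b = φ (epsS W b) := rfl
  rw [h2, epsS_eq, fun_rid_contract]





variable {B : Type} [NormedRing B] [StarRing B] [CStarRing B] [NormedAlgebra ℂ B]
  [StarModule ℂ B] [FiniteDimensional ℂ B] (W : WHA B)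

/-- expansion of a tensor along a basis of the first factor -/
lemma expand_first {M : Type} [AddCommGroup M] [Module ℂ M] (t : B ⊗[ℂ] M) :
    t = ∑ i, (Module.Free.chooseBasis ℂ B) i ⊗ₜ[ℂ]
        ((TensorProduct.lid ℂ M)
          ((TensorProduct.map ((Module.Free.chooseBasis ℂ B).coord i) LinearMap.id) t)) := by
  set β := Module.Free.chooseBasis ℂ B
  induction t with
  | zero => simp
  | tmul x m =>
      simp only [TensorProduct.map_tmul, LinearMap.id_coe, id_eq, TensorProduct.lid_tmul]
      calc x ⊗ₜ[ℂ] m = (∑ i, β.repr x i • β i) ⊗ₜ[ℂ] m := by rw [β.sum_repr x]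
        _ = ∑ i, (β.repr x i • β i) ⊗ₜ[ℂ] m := by rw [sum_tmul]
        _ = ∑ i, β i ⊗ₜ[ℂ] (β.coord i x • m) := by
            refine Finset.sum_congr rfl fun i _ => ?_
            rw [Module.Basis.coord_apply, smul_tmul]
  | add x y hx hy =>
      conv_lhs => rw [hx, hy]
      rw [← Finset.sum_add_distrib]
      refine Finset.sum_congr rfl fun i _ => ?_
      rw [map_add, map_add, tmul_add]

/-- functionals separate points of `B ⊗ B` -/
lemma ext2 (u₁ u₂ : B ⊗[ℂ] B)
    (h : ∀ ψ : Module.Dual ℂ B,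
      (TensorProduct.lid ℂ B) ((TensorProduct.map ψ LinearMap.id) u₁) =
      (TensorProduct.lid ℂ B) ((TensorProduct.map ψ LinearMap.id) u₂)) : u₁ = u₂ := by
  rw [expand_first u₁, expand_first u₂]
  exact Finset.sum_congr rfl fun i _ => by rw [h]

/-- functionals separate points of `B ⊗ (B ⊗ B)` -/
lemma ext3 (t₁ t₂ : B ⊗[ℂ] (B ⊗[ℂ] B))
    (h : ∀ χ ψ : Module.Dual ℂ B,
      (TensorProduct.lid ℂ B) ((TensorProduct.map ψ LinearMap.id)
        ((TensorProduct.lid ℂ (B ⊗[ℂ] B)) ((TensorProduct.map χ LinearMap.id) t₁))) =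
      (TensorProduct.lid ℂ B) ((TensorProduct.map ψ LinearMap.id)
        ((TensorProduct.lid ℂ (B ⊗[ℂ] B)) ((TensorProduct.map χ LinearMap.id) t₂)))) :
    t₁ = t₂ := by
  rw [expand_first t₁, expand_first t₂]
  refine Finset.sum_congr rfl fun i _ => ?_
  congr 1
  exact ext2 _ _ (h _)

/-- `y ↦ (1 ⊗ y) Δ1` -/
def K2m : B →ₗ[ℂ] B ⊗[ℂ] B :=
  LinearMap.mulRight ℂ (W.Δ 1) ∘ₗ TensorProduct.mk ℂ B B 1

lemma K2m_apply (y : B) : K2m W y = ((1 : B) ⊗ₜ[ℂ] y) * W.Δ 1 := rfl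

/-- the element `Y(x)` -/
def Yel (x : B) : B ⊗[ℂ] (B ⊗[ℂ] B) :=
  (TensorProduct.map (epsT W) (K2m W)) (W.Δ x)

/-- the scalar contraction as a linear map -/
def scL (χ ψ : Module.Dual ℂ B) : B ⊗[ℂ] B →ₗ[ℂ] ℂ :=
  (TensorProduct.lid ℂ ℂ).toLinearMap ∘ₗ TensorProduct.map χ ψ

lemma scL_apply (χ ψ : Module.Dual ℂ B) (t : B ⊗[ℂ] B) : scL χ ψ t = sc χ ψ t := rfl

lemma sc_comp (χ ψ : Module.Dual ℂ B) (f g : B →ₗ[ℂ] B) (t : B ⊗[ℂ] B) :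
    sc (χ ∘ₗ f) (ψ ∘ₗ g) t = sc χ ψ ((TensorProduct.map f g) t) := by
  induction t with
  | zero => simp [sc]
  | tmul x y => simp [sc]
  | add x y hx hy => simp only [sc, map_add] at hx hy ⊢; rw [hx, hy]

/-- the triple contraction -/
def Phi (χ ψ : Module.Dual ℂ B) (w : B ⊗[ℂ] (B ⊗[ℂ] B)) : B :=
  (TensorProduct.lid ℂ B) ((TensorProduct.map ψ LinearMap.id)
    ((TensorProduct.lid ℂ (B ⊗[ℂ] B)) ((TensorProduct.map χ LinearMap.id) w)))

lemma Phi_tmul (χ ψ : Module.Dual ℂ B) (x y z : B) :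
    Phi χ ψ (x ⊗ₜ[ℂ] (y ⊗ₜ[ℂ] z)) = χ x • ψ y • z := by
  simp [Phi, TensorProduct.smul_tmul', smul_smul]

lemma Phi_tmul2 (χ ψ : Module.Dual ℂ B) (x : B) (u : B ⊗[ℂ] B) :
    Phi χ ψ (x ⊗ₜ[ℂ] u) =
      χ x • (TensorProduct.lid ℂ B) ((TensorProduct.map ψ LinearMap.id) u) := by
  simp [Phi]

lemma Phi_add (χ ψ : Module.Dual ℂ B) (w w' : B ⊗[ℂ] (B ⊗[ℂ] B)) :
    Phi χ ψ (w + w') = Phi χ ψ w + Phi χ ψ w' := by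
  simp [Phi]

lemma Phi_zero (χ ψ : Module.Dual ℂ B) : Phi χ ψ (0 : B ⊗[ℂ] (B ⊗[ℂ] B)) = 0 := by
  simp [Phi]

/- generic contraction lemmas -/
lemma L1 (ξ : B ⊗[ℂ] B →ₗ[ℂ] ℂ) (h : B →ₗ[ℂ] B ⊗[ℂ] B) (s : B ⊗[ℂ] B) :
    (TensorProduct.lid ℂ B) ((TensorProduct.map (ξ ∘ₗ h) LinearMap.id) s) =
      (TensorProduct.lid ℂ B) ((TensorProduct.map ξ LinearMap.id)
        ((TensorProduct.map h LinearMap.id) s)) := by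
  induction s with
  | zero => simp
  | tmul x y => simp
  | add x y hx hy => simp only [map_add] at hx hy ⊢; rw [hx, hy]

lemma mapGen_fst_comp (F : B ⊗[ℂ] B →ₗ[ℂ] B ⊗[ℂ] B) (D : B →ₗ[ℂ] B ⊗[ℂ] B) (s : B ⊗[ℂ] B) :
    (TensorProduct.map (F ∘ₗ D) (LinearMap.id : B →ₗ[ℂ] B)) s =
      (TensorProduct.map F LinearMap.id) ((TensorProduct.map D LinearMap.id) s) := by
  induction s with
  | zero => simp
  | tmul x y => simp
  | add x y hx hy => simp only [map_add] at hx hy ⊢; rw [hx, hy]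

lemma assoc_symm_nat (f g h : B →ₗ[ℂ] B) (w : B ⊗[ℂ] (B ⊗[ℂ] B)) :
    (TensorProduct.map (TensorProduct.map f g) h) ((TensorProduct.assoc ℂ B B B).symm w) =
      (TensorProduct.assoc ℂ B B B).symm ((TensorProduct.map f (TensorProduct.map g h)) w) := by
  induction w with
  | zero => simp only [LinearEquiv.map_zero, map_zero]
  | add x y hx hy =>
      simp only [LinearEquiv.map_add, map_add]; rw [hx, hy]
  | tmul x u =>
      induction u with
      | zero => simp only [tmul_zero, LinearEquiv.map_zero, map_zero]
      | add p q hp hq =>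
          simp only [tmul_add, LinearEquiv.map_add, map_add]; rw [hp, hq]
      | tmul y z =>
          rw [TensorProduct.assoc_symm_tmul, TensorProduct.map_tmul, TensorProduct.map_tmul,
            TensorProduct.map_tmul, TensorProduct.map_tmul, TensorProduct.assoc_symm_tmul]

lemma phi_scl (χ ψ : Module.Dual ℂ B) (w : B ⊗[ℂ] (B ⊗[ℂ] B)) :
    (TensorProduct.lid ℂ B) ((TensorProduct.map (scL χ ψ) LinearMap.id)
      ((TensorProduct.assoc ℂ B B B).symm w)) = Phi χ ψ w := by
  induction w with
  | zero => simp only [LinearEquiv.map_zero, map_zero, Phi_zero]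
  | add x y hx hy =>
      simp only [LinearEquiv.map_add, map_add]; rw [hx, hy, Phi_add]
  | tmul x u =>
      induction u with
      | zero =>
          simp only [tmul_zero, LinearEquiv.map_zero, map_zero]
          rw [show (0 : B ⊗[ℂ] (B ⊗[ℂ] B)) = x ⊗ₜ[ℂ] (0 : B ⊗[ℂ] B) by rw [tmul_zero]]
          rw [Phi_tmul2, map_zero, map_zero, smul_zero]
      | add p q hp hq =>
          simp only [tmul_add, LinearEquiv.map_add, map_add]
          rw [hp, hq, ← Phi_add, ← tmul_add]
      | tmul y z =>
          rw [TensorProduct.assoc_symm_tmul, TensorProduct.map_tmul, TensorProduct.lid_tmul,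
            Phi_tmul, scL_apply, sc_tmul, mul_smul]
          rfl

/-- `(id ⊗ (ε_s ⊗ id)∘Δ) = (id ⊗ K2m)` on second legs -/
lemma step_K2 (s : B ⊗[ℂ] B) :
    (TensorProduct.map (epsT W) (TensorProduct.map (epsS W) LinearMap.id ∘ₗ W.Δ)) s =
      (TensorProduct.map (epsT W) (K2m W)) s := by
  have hK : (TensorProduct.map (epsS W) LinearMap.id ∘ₗ W.Δ) = K2m W := by
    ext y
    simp only [LinearMap.coe_comp, Function.comp_apply]
    rw [K2, K2m_apply]
  rw [hK]

/-- the main computation: `arrL b (ε̂t(χ)·ε̂s(ψ)) = Φ_{χψ}(Y(b))` -/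
lemma arrL_gen (b : B) (χ ψ : Module.Dual ℂ B) :
    W.arrL b (W.mulHat (W.εtHat χ) (W.εsHat ψ)) = Phi χ ψ (Yel W b) := by
  rw [etHat_eq, esHat_eq, arrL_eq]
  have hθ : W.mulHat (χ ∘ₗ epsT W) (ψ ∘ₗ epsS W) =
      scL χ ψ ∘ₗ (TensorProduct.map (epsT W) (epsS W)) ∘ₗ W.Δ := by
    ext y
    simp only [LinearMap.coe_comp, Function.comp_apply]
    rw [mulHat_apply, sc_comp, scL_apply]
  rw [hθ]
  have hsplit : (scL χ ψ ∘ₗ (TensorProduct.map (epsT W) (epsS W)) ∘ₗ W.Δ) =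
      scL χ ψ ∘ₗ ((TensorProduct.map (epsT W) (epsS W)) ∘ₗ W.Δ) := rfl
  rw [hsplit, L1, mapGen_fst_comp]
  -- now use coassociativity
  have hco : (TensorProduct.map W.Δ LinearMap.id) (W.Δ b) =
      (TensorProduct.assoc ℂ B B B).symm
        ((TensorProduct.map LinearMap.id W.Δ) (W.Δ b)) := by
    rw [← W.coassoc b, LinearEquiv.symm_apply_apply]
  rw [hco, assoc_symm_nat]
  have hcomb : ∀ s : B ⊗[ℂ] B,
      (TensorProduct.map (epsT W) (TensorProduct.map (epsS W) LinearMap.id))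
        ((TensorProduct.map LinearMap.id W.Δ) s) =
      (TensorProduct.map (epsT W) (K2m W)) s := by
    intro s
    induction s with
    | zero => simp
    | add x y hx hy => simp only [map_add] at hx hy ⊢; rw [hx, hy]
    | tmul y c =>
        simp only [TensorProduct.map_tmul, LinearMap.id_coe, id_eq]
        rw [K2, K2m_apply]
  rw [hcomb, phi_scl]
  rfl

lemma Phi_mulLeft (b : B) (χ ψ : Module.Dual ℂ B) (w : B ⊗[ℂ] (B ⊗[ℂ] B)) :
    b * Phi χ ψ w = Phi χ ψ
      ((TensorProduct.map LinearMap.id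
        (TensorProduct.map LinearMap.id (LinearMap.mulLeft ℂ b))) w) := by
  induction w with
  | zero => rw [Phi_zero, mul_zero, map_zero, Phi_zero]
  | add x y hx hy => rw [Phi_add, mul_add, hx, hy, map_add, Phi_add]
  | tmul x u =>
      rw [TensorProduct.map_tmul, Phi_tmul2, Phi_tmul2, ← map_split,
        map_snd_out ψ (LinearMap.mulLeft ℂ b) u]
      simp only [LinearMap.id_coe, id_eq, LinearMap.mulLeft_apply]
      rw [mul_smul_comm]




variable {B : Type} [NormedRing B] [StarRing B] [CStarRing B] [NormedAlgebra ℂ B]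
  [StarModule ℂ B] [FiniteDimensional ℂ B] (W : WHA B)

lemma arrL_add (b : B) (φ φ' : Module.Dual ℂ B) :
    W.arrL b (φ + φ') = W.arrL b φ + W.arrL b φ' := by
  rw [arrL_eq, arrL_eq, arrL_eq, TensorProduct.map_add_left, LinearMap.add_apply, map_add]

lemma arrL_smul (b : B) (a : ℂ) (φ : Module.Dual ℂ B) :
    W.arrL b (a • φ) = a • W.arrL b φ := by
  rw [arrL_eq, arrL_eq, TensorProduct.map_smul_left, LinearMap.smul_apply, map_smul]

lemma arrL_zero (b : B) : W.arrL b (0 : Module.Dual ℂ B) = 0 := by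
  rw [arrL_eq, TensorProduct.map_zero_left, LinearMap.zero_apply, map_zero]

/-- the condition submodule -/
def Pmod (b : B) : Submodule ℂ (Module.Dual ℂ B) where
  carrier := {φ | W.arrL b φ = b * W.arrL 1 φ}
  add_mem' := by
    intro φ ψ h1 h2
    simp only [Set.mem_setOf_eq] at h1 h2 ⊢
    rw [arrL_add, arrL_add, h1, h2, mul_add]
  zero_mem' := by
    simp only [Set.mem_setOf_eq]
    rw [arrL_zero, arrL_zero, mul_zero]
  smul_mem' := by
    intro c φ h
    simp only [Set.mem_setOf_eq] at h ⊢
    rw [arrL_smul, arrL_smul, h, mul_smul_comm]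

lemma mem_Pmod (b : B) (φ : Module.Dual ℂ B) :
    φ ∈ Pmod W b ↔ W.arrL b φ = b * W.arrL 1 φ := Iff.rfl

/-- reduction of the condition to the generators -/
lemma iff_min_gen (b : B) :
    (∀ φ ∈ W.minHat, W.arrL b φ = b * W.arrL 1 φ) ↔
      (∀ χ ψ : Module.Dual ℂ B,
        W.arrL b (W.mulHat (W.εtHat χ) (W.εsHat ψ)) =
          b * W.arrL 1 (W.mulHat (W.εtHat χ) (W.εsHat ψ))) := by
  constructor
  · intro h χ ψ
    refine h _ (Submodule.subset_span ?_)
    exact ⟨W.εtHat χ, Submodule.subset_span ⟨χ, rfl⟩,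
      W.εsHat ψ, Submodule.subset_span ⟨ψ, rfl⟩, rfl⟩
  · intro h φ hφ
    have hle : W.minHat ≤ Pmod W b := by
      rw [WHA.minHat, Submodule.span_le]
      rintro φ' ⟨u, hu, v, hv, rfl⟩
      have hv' : ∀ v' ∈ Submodule.span ℂ (Set.range W.εsHat), ∀ u' : Module.Dual ℂ B,
          (∀ ψ : Module.Dual ℂ B, W.mulHat u' (W.εsHat ψ) ∈ Pmod W b) →
          W.mulHat u' v' ∈ Pmod W b := by
        intro v' hv' u' hbase
        induction hv' using Submodule.span_induction with
        | mem x hx => obtain ⟨ψ, rfl⟩ := hx; exact hbase ψ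
        | zero => rw [map_zero]; exact (Pmod W b).zero_mem
        | add x y hx hy ihx ihy => rw [map_add]; exact (Pmod W b).add_mem ihx ihy
        | smul a x hx ihx => rw [map_smul]; exact (Pmod W b).smul_mem a ihx
      have hu' : ∀ u' ∈ Submodule.span ℂ (Set.range W.εtHat),
          ∀ ψ : Module.Dual ℂ B, W.mulHat u' (W.εsHat ψ) ∈ Pmod W b := by
        intro u' hu'
        induction hu' using Submodule.span_induction with
        | mem x hx =>
            obtain ⟨χ, rfl⟩ := hx
            intro ψ
            exact (mem_Pmod W b _).2 (h χ ψ)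
        | zero =>
            intro ψ
            rw [map_zero, LinearMap.zero_apply]
            exact (Pmod W b).zero_mem
        | add x y hx hy ihx ihy =>
            intro ψ
            rw [map_add, LinearMap.add_apply]
            exact (Pmod W b).add_mem (ihx ψ) (ihy ψ)
        | smul a x hx ihx =>
            intro ψ
            rw [map_smul, LinearMap.smul_apply]
            exact (Pmod W b).smul_mem a (ihx ψ)
      exact hv' v hv u (hu' u hu)
    exact (mem_Pmod W b φ).1 (hle hφ)

lemma mapKsplit (f : B →ₗ[ℂ] B) (t : B ⊗[ℂ] B) :
    (TensorProduct.map f (K2m W)) t =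
      (TensorProduct.map LinearMap.id (K2m W)) ((TensorProduct.map f LinearMap.id) t) := by
  induction t with
  | zero => simp
  | tmul x y => simp
  | add x y hx hy => simp only [map_add] at hx hy ⊢; rw [hx, hy]

lemma K2m_mulLeft (b y : B) :
    K2m W (b * y) =
      (TensorProduct.map LinearMap.id (LinearMap.mulLeft ℂ b)) (K2m W y) := by
  rw [K2m_apply, K2m_apply, map_id_mulLeft, ← mul_assoc,
    Algebra.TensorProduct.tmul_mul_tmul, one_mul]

lemma mapK2m_comm (f : B →ₗ[ℂ] B) (b : B) (t : B ⊗[ℂ] B) :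
    (TensorProduct.map LinearMap.id (K2m W))
        ((TensorProduct.map f (LinearMap.mulLeft ℂ b)) t) =
      (TensorProduct.map LinearMap.id (TensorProduct.map LinearMap.id (LinearMap.mulLeft ℂ b)))
        ((TensorProduct.map f (K2m W)) t) := by
  induction t with
  | zero => simp
  | tmul x y =>
      simp only [TensorProduct.map_tmul, LinearMap.id_coe, id_eq, LinearMap.mulLeft_apply]
      rw [K2m_mulLeft]
  | add x y hx hy => simp only [map_add] at hx hy ⊢; rw [hx, hy]

/-- the left inverse of tensoring with `K2m` -/
def NL : B ⊗[ℂ] (B ⊗[ℂ] B) →ₗ[ℂ] B ⊗[ℂ] B :=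
  TensorProduct.map LinearMap.id
    ((TensorProduct.lid ℂ B).toLinearMap ∘ₗ TensorProduct.map W.ε LinearMap.id)

lemma NL_K2m (w : B ⊗[ℂ] B) :
    NL W ((TensorProduct.map LinearMap.id (K2m W)) w) = w := by
  induction w with
  | zero => simp [NL]
  | add x y hx hy => simp only [map_add] at hx hy ⊢; rw [hx, hy]
  | tmul a c =>
      simp only [NL, TensorProduct.map_tmul, LinearMap.id_coe, id_eq, LinearMap.coe_comp,
        Function.comp_apply, LinearEquiv.coe_coe]
      congr 1
      rw [K2m_apply, ← map_id_mulLeft, ← map_split,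
        map_snd_out W.ε (LinearMap.mulLeft ℂ c) (W.Δ 1), W.counit_left,
        LinearMap.mulLeft_apply, mul_one]

/-- the statement `D` -/
def Dstmt (b : B) : Prop :=
  (TensorProduct.map (epsT W) LinearMap.id) (W.Δ b) =
    (TensorProduct.map (epsT W) (LinearMap.mulLeft ℂ b)) (W.Δ 1)

lemma iff_Y_D (b : B) :
    Yel W b = (TensorProduct.map LinearMap.id
        (TensorProduct.map LinearMap.id (LinearMap.mulLeft ℂ b))) (Yel W 1) ↔ Dstmt W b := by
  have hYb : Yel W b =
      (TensorProduct.map LinearMap.id (K2m W))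
        ((TensorProduct.map (epsT W) LinearMap.id) (W.Δ b)) := mapKsplit W _ _
  have hY1 : (TensorProduct.map LinearMap.id
      (TensorProduct.map LinearMap.id (LinearMap.mulLeft ℂ b))) (Yel W 1) =
      (TensorProduct.map LinearMap.id (K2m W))
        ((TensorProduct.map (epsT W) (LinearMap.mulLeft ℂ b)) (W.Δ 1)) := by
    rw [mapK2m_comm]
    rfl
  constructor
  · intro h
    have h2 := congrArg (NL W) h
    rw [hYb, NL_K2m, hY1, NL_K2m] at h2
    exact h2
  · intro h
    rw [hYb, h, ← hY1]

/-- condition (i) is equivalent to the tensor statement `D` -/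
lemma iff_i_D (b : B) :
    (∀ φ ∈ W.minHat, W.arrL b φ = b * W.arrL 1 φ) ↔ Dstmt W b := by
  rw [iff_min_gen]
  rw [← iff_Y_D]
  constructor
  · intro h
    apply ext3
    intro χ ψ
    have h1 := h χ ψ
    rw [arrL_gen, arrL_gen, Phi_mulLeft] at h1
    exact h1
  · intro h χ ψ
    rw [arrL_gen, arrL_gen, Phi_mulLeft, h]





variable {B : Type} [NormedRing B] [StarRing B] [CStarRing B] [NormedAlgebra ℂ B]
  [StarModule ℂ B] [FiniteDimensional ℂ B] (W : WHA B)

lemma conjMap_mulLeft (b : B) :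
    conjMap (LinearMap.mulLeft ℂ b) = LinearMap.mulRight ℂ (star b) := by
  ext y
  simp only [conjMap_apply, LinearMap.mulLeft_apply, LinearMap.mulRight_apply, star_mul,
    star_star]

lemma conjMap_mulRight (c : B) :
    conjMap (LinearMap.mulRight ℂ c) = LinearMap.mulLeft ℂ (star c) := by
  ext y
  simp only [conjMap_apply, LinearMap.mulRight_apply, LinearMap.mulLeft_apply, star_mul,
    star_star]

/-- the statement `D'` -/
def D'stmt (c : B) : Prop :=
  (TensorProduct.map (epsR W) LinearMap.id) (W.Δ c) =
    (TensorProduct.map (epsR W) (LinearMap.mulRight ℂ c)) (W.Δ 1)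

lemma iff_D_D' (b : B) : Dstmt W b ↔ D'stmt W (star b) := by
  constructor
  · intro h
    have h' := congrArg (tensorStar B B) h
    rw [tensorStar_map, tensorStar_map, conjMap_epsT, conjMap_id, conjMap_mulLeft,
      ← W.comul_star, comul_one_star] at h'
    exact h'
  · intro h
    have h' := congrArg (tensorStar B B) h
    rw [tensorStar_map, tensorStar_map, conjMap_epsR, conjMap_id, conjMap_mulRight,
      ← W.comul_star, star_star, comul_one_star] at h'
    exact h'

/-- the statement `C'` -/
def C'stmt (c : B) : Prop :=
  (TensorProduct.map (epsR W) (LinearMap.mulLeft ℂ c)) (W.Δ 1) =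
    (TensorProduct.map (epsR W) (LinearMap.mulRight ℂ c)) (W.Δ 1)

lemma iff_D'_C' (c : B) : D'stmt W c ↔ C'stmt W c := by
  unfold D'stmt C'stmt
  rw [rhoK1]

lemma epsR_mem_Bt (y : B) : epsR W y ∈ W.Bt := by
  have h : W.εt (epsR W y) = epsR W y := by
    have h0 := congrArg (fun f : B →ₗ[ℂ] B => f y) (epsT_epsR W)
    simp only [LinearMap.coe_comp, Function.comp_apply] at h0
    rw [epsT_apply] at h0
    exact h0
  rw [← h]
  exact Submodule.subset_span ⟨epsR W y, rfl⟩

lemma epsT_mem_Bt (y : B) : epsT W y ∈ W.Bt := by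
  rw [epsT_apply]
  exact Submodule.subset_span ⟨y, rfl⟩

lemma star_epsT (y : B) : star (W.εt y) = epsR W (star y) := by
  have h := congrArg (fun f : B →ₗ[ℂ] B => f (star y)) (conjMap_epsT W)
  simp only [conjMap_apply, star_star] at h
  rw [← h, epsT_apply]

lemma star_mem_Bt {z : B} (hz : z ∈ W.Bt) : star z ∈ W.Bt := by
  induction hz using Submodule.span_induction with
  | mem x hx =>
      obtain ⟨y, rfl⟩ := hx
      rw [star_epsT]
      exact epsR_mem_Bt W (star y)
  | zero => rw [star_zero]; exact (W.Bt).zero_mem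
  | add x y hx hy ihx ihy => rw [star_add]; exact (W.Bt).add_mem ihx ihy
  | smul a x hx ihx =>
      rw [star_smul]
      exact (W.Bt).smul_mem _ ihx

lemma comm_star (b : B) (h : ∀ z ∈ W.Bt, b * z = z * b) :
    ∀ z ∈ W.Bt, star b * z = z * star b := by
  intro z hz
  have h1 : b * star z = star z * b := h (star z) (star_mem_Bt W hz)
  calc star b * z = star (star z * b) := by rw [star_mul, star_star]
    _ = star (b * star z) := by rw [h1]
    _ = z * star b := by rw [star_mul, star_star]

lemma contract_fg (φ : Module.Dual ℂ B) (f g : B →ₗ[ℂ] B) (t : B ⊗[ℂ] B) :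
    (TensorProduct.lid ℂ B) ((TensorProduct.map φ LinearMap.id)
      ((TensorProduct.map f g) t)) =
    g ((TensorProduct.lid ℂ B) ((TensorProduct.map (φ ∘ₗ f) LinearMap.id) t)) := by
  induction t with
  | zero => simp
  | tmul x y => simp
  | add x y hx hy => simp only [map_add] at hx hy ⊢; rw [hx, hy]

lemma map_fg_idh (f g h : B →ₗ[ℂ] B) (t : B ⊗[ℂ] B) :
    (TensorProduct.map f g) ((TensorProduct.map LinearMap.id h) t) =
      (TensorProduct.map f (g ∘ₗ h)) t := by
  induction t with
  | zero => simp
  | tmul x y => simp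
  | add x y hx hy => simp only [map_add] at hx hy ⊢; rw [hx, hy]

lemma C'_iff_comm (c : B) :
    C'stmt W c ↔ ∀ z ∈ W.Bt, c * z = z * c := by
  constructor
  · intro h z hz
    have hx : ∀ x : B, c * epsT W x = epsT W x * c := by
      intro x
      have h2 := congrArg (fun t : B ⊗[ℂ] B => (TensorProduct.lid ℂ B)
        ((TensorProduct.map (W.ε ∘ₗ LinearMap.mulRight ℂ x) LinearMap.id) t)) h
      rw [contract_fg, contract_fg] at h2
      have hcomp : (W.ε ∘ₗ LinearMap.mulRight ℂ x) ∘ₗ epsR W =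
          W.ε ∘ₗ LinearMap.mulRight ℂ x := by
        ext y
        simp only [LinearMap.coe_comp, Function.comp_apply, LinearMap.mulRight_apply]
        exact eps_epsR_mul W y x
      rw [hcomp, ← epsT_eq, LinearMap.mulLeft_apply, LinearMap.mulRight_apply] at h2
      exact h2
    induction hz using Submodule.span_induction with
    | mem z' hz' =>
        obtain ⟨y, rfl⟩ := hz'
        have := hx y
        rw [epsT_apply] at this
        exact this
    | zero => rw [mul_zero, zero_mul]
    | add x y hx' hy' ihx ihy => rw [mul_add, add_mul, ihx, ihy]
    | smul a x hx' ihx => rw [mul_smul_comm, smul_mul_assoc, ihx]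
  · intro h
    unfold C'stmt
    have hE : W.Δ 1 = (TensorProduct.map LinearMap.id (epsT W)) (W.Δ 1) := (K3 W).symm
    rw [hE, map_fg_idh, map_fg_idh]
    have hcomp : LinearMap.mulLeft ℂ c ∘ₗ epsT W = LinearMap.mulRight ℂ c ∘ₗ epsT W := by
      ext y
      simp only [LinearMap.coe_comp, Function.comp_apply, LinearMap.mulLeft_apply,
        LinearMap.mulRight_apply]
      exact h (epsT W y) (epsT_mem_Bt W y)
    rw [hcomp]

/-- the final equivalence, in internal form -/
lemma main_iff (b : B) :
    (∀ φ ∈ W.minHat, W.arrL b φ = b * W.arrL 1 φ) ↔ (∀ z ∈ W.Bt, b * z = z * b) := by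
  rw [iff_i_D, iff_D_D', iff_D'_C', C'_iff_comm]
  constructor
  · intro h z hz
    have h2 := comm_star W (star b) h z hz
    rwa [star_star] at h2
  · intro h
    exact comm_star W b h



end WHAProof

theorem mem_max_quotient_coideal_iff_commutes_Bt {B : Type} [NormedRing B] [StarRing B]
    [CStarRing B] [NormedAlgebra ℂ B] [StarModule ℂ B] [FiniteDimensional ℂ B]
    (W : WHA B) (b : B) :
    (∀ φ ∈ W.minHat, W.arrL b φ = b * W.arrL 1 φ) ↔ (∀ z ∈ W.Bt, b * z = z * b) :=
  WHAProof.main_iff W b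

end
end

section
/- Let B be a weak Hopf *-algebra and let I ⊆ B be a coideal such that S(x₍₁₎) a x₍₂₎ ∈ I for all a ∈ I, x ∈ B, and such that every element of I commutes with every element of B_t (in particular, any invariant coideal). Writing a ◁ b := S(b₍₁₎) a b₍₂₎, the following hold: (i) the Yetter–Drinfel'd relation Δ(a ◁ b) = (a₍₁₎ ◁ b₍₂₎) ⊗ S(b₍₁₎) a₍₂₎ b₍₃₎ for all a ∈ I, b ∈ B; (ii) the braided-commutativity relation a b = b₍₁₎ (a ◁ b₍₂₎) for all a, b ∈ I. -/
open scoped TensorProduct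
open TensorProduct

noncomputable section

set_option linter.unusedSectionVars false
set_option synthInstance.maxHeartbeats 1000000
set_option maxHeartbeats 2000000

namespace WHAAux

variable {B : Type} [NormedRing B] [StarRing B] [CStarRing B] [NormedAlgebra ℂ B]
  [StarModule ℂ B] [FiniteDimensional ℂ B]

/-- `b ↦ b ⊗ y` -/
def mkr (y : B) : B →ₗ[ℂ] B ⊗[ℂ] B := (TensorProduct.mk ℂ B B).flip y

@[simp] lemma mkr_apply (y x : B) : mkr y x = x ⊗ₜ[ℂ] y := rfl

/-- reshuffle `(p ⊗ (q₁ ⊗ q₂)) ⊗ r ↦ (p ⊗ q₁) ⊗ (q₂ ⊗ r)` -/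
def xi : (B ⊗[ℂ] (B ⊗[ℂ] B)) ⊗[ℂ] B →ₗ[ℂ] (B ⊗[ℂ] B) ⊗[ℂ] (B ⊗[ℂ] B) :=
  (TensorProduct.assoc ℂ B B (B ⊗[ℂ] B)).symm.toLinearMap
    ∘ₗ TensorProduct.map LinearMap.id (TensorProduct.assoc ℂ B B B).toLinearMap
    ∘ₗ (TensorProduct.assoc ℂ B (B ⊗[ℂ] B) B).toLinearMap

@[simp] lemma xi_tmul (p q₁ q₂ r : B) :
    xi ((p ⊗ₜ[ℂ] (q₁ ⊗ₜ[ℂ] q₂)) ⊗ₜ[ℂ] r) = (p ⊗ₜ[ℂ] q₁) ⊗ₜ[ℂ] (q₂ ⊗ₜ[ℂ] r) := by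
  simp [xi]

lemma assoc_tmul_right (u : B ⊗[ℂ] B) (y : B) :
    (TensorProduct.assoc ℂ B B B) (u ⊗ₜ[ℂ] y)
      = (TensorProduct.map LinearMap.id (mkr y)) u := by
  induction u using TensorProduct.induction_on with
  | zero => simp
  | tmul p q => simp
  | add u v hu hv => simp [add_tmul, hu, hv]

lemma xi_assoc_tmul (v : (B ⊗[ℂ] B) ⊗[ℂ] B) (y : B) :
    xi ((TensorProduct.assoc ℂ B B B v) ⊗ₜ[ℂ] y)
      = (TensorProduct.map LinearMap.id (mkr y)) v := by
  induction v using TensorProduct.induction_on with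
  | zero => simp
  | tmul u r =>
    induction u using TensorProduct.induction_on with
    | zero => simp
    | tmul p q => simp
    | add u1 u2 h1 h2 => simp [add_tmul, h1, h2]
  | add v1 v2 h1 h2 => simp [add_tmul, h1, h2]

variable (W : WHA B)

/-- the map `b ↦ a ◁ b` as a linear map -/
def adL (a : B) : B →ₗ[ℂ] B :=
  LinearMap.mul' ℂ B ∘ₗ TensorProduct.map W.S (LinearMap.mulLeft ℂ a) ∘ₗ W.Δ

lemma adL_apply (a b : B) : adL W a b = W.ad a b := rfl

/-- `(Δ ⊗ Δ)` with the middle legs re-coassociated -/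
def rho : (B ⊗[ℂ] B) ⊗[ℂ] B →ₗ[ℂ] (B ⊗[ℂ] B) ⊗[ℂ] (B ⊗[ℂ] B) :=
  xi ∘ₗ TensorProduct.map (TensorProduct.map LinearMap.id W.Δ) LinearMap.id

/-- The map `u ⊗ v ↦ (S ⊗ S)(σ u) · Δ a · v` on `(B ⊗ B) ⊗ (B ⊗ B)`. -/
def Psi (a : B) : (B ⊗[ℂ] B) ⊗[ℂ] (B ⊗[ℂ] B) →ₗ[ℂ] B ⊗[ℂ] B :=
  LinearMap.mul' ℂ (B ⊗[ℂ] B) ∘ₗ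
    TensorProduct.map
      (LinearMap.mulRight ℂ (W.Δ a) ∘ₗ TensorProduct.map W.S W.S
        ∘ₗ (TensorProduct.comm ℂ B B).toLinearMap)
      LinearMap.id

@[simp] lemma Psi_tmul (a : B) (u v : B ⊗[ℂ] B) :
    Psi W a (u ⊗ₜ[ℂ] v)
      = (TensorProduct.map W.S W.S) ((TensorProduct.comm ℂ B B) u) * W.Δ a * v := by
  simp [Psi, LinearMap.mul'_apply]

lemma key1 (a b : B) :
    W.Δ (W.ad a b) = Psi W a (TensorProduct.map W.Δ W.Δ (W.Δ b)) := by
  have h : W.Δ ∘ₗ (LinearMap.mul' ℂ B) ∘ₗ TensorProduct.map W.S (LinearMap.mulLeft ℂ a)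
      = (Psi W a) ∘ₗ TensorProduct.map W.Δ W.Δ := by
    apply TensorProduct.ext'
    intro x y
    simp [LinearMap.mul'_apply, W.comul_mul, W.antipode_comul, mul_assoc]
  have h2 := LinearMap.congr_fun h (W.Δ b)
  simpa [WHA.ad] using h2

lemma lem1 (u : B ⊗[ℂ] B) (y : B) :
    TensorProduct.map W.Δ (LinearMap.id : B ⊗[ℂ] B →ₗ[ℂ] B ⊗[ℂ] B)
        ((TensorProduct.assoc ℂ B B B) (u ⊗ₜ[ℂ] y))
      = TensorProduct.map LinearMap.id (mkr y)
          (TensorProduct.map W.Δ LinearMap.id u) := by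
  induction u using TensorProduct.induction_on with
  | zero => simp
  | tmul p q => simp
  | add u v hu hv => simp [add_tmul, hu, hv]

lemma lem2 (u : B ⊗[ℂ] B) (y : B) :
    rho W (u ⊗ₜ[ℂ] y)
      = xi ((TensorProduct.map LinearMap.id W.Δ u) ⊗ₜ[ℂ] y) := by
  simp [rho]

lemma key2 (b : B) :
    TensorProduct.map W.Δ W.Δ (W.Δ b)
      = rho W (TensorProduct.map W.Δ LinearMap.id (W.Δ b)) := by
  have hmaps : (TensorProduct.map W.Δ (LinearMap.id : B ⊗[ℂ] B →ₗ[ℂ] B ⊗[ℂ] B)) ∘ₗ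
        (TensorProduct.assoc ℂ B B B).toLinearMap ∘ₗ TensorProduct.map W.Δ LinearMap.id
      = rho W ∘ₗ TensorProduct.map W.Δ LinearMap.id := by
    apply TensorProduct.ext'
    intro x y
    simp only [LinearMap.comp_apply, LinearEquiv.coe_coe, TensorProduct.map_tmul,
      LinearMap.id_apply]
    rw [lem1, lem2, ← W.coassoc x, xi_assoc_tmul]
  have h2 := LinearMap.congr_fun hmaps (W.Δ b)
  simp only [LinearMap.comp_apply, LinearEquiv.coe_coe] at h2
  rw [W.coassoc b] at h2
  rw [← h2]
  generalize W.Δ b = t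
  induction t using TensorProduct.induction_on with
  | zero => simp
  | tmul x y => simp
  | add t1 t2 g1 g2 => simp only [map_add, g1, g2]

/-- the middle multiplication `p ⊗ r ↦ S p * t * r` -/
def mulmid (t : B) : B ⊗[ℂ] B →ₗ[ℂ] B :=
  LinearMap.mul' ℂ B ∘ₗ TensorProduct.map (LinearMap.mulRight ℂ t ∘ₗ W.S) LinearMap.id

@[simp] lemma mulmid_tmul (t p r : B) : mulmid W t (p ⊗ₜ[ℂ] r) = W.S p * t * r := by
  simp [mulmid, LinearMap.mul'_apply]

/-- `(p ⊗ q) ⊗ r ↦ (s ◁ q) ⊗ (S p * t * r)` -/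
def Kmap (s t : B) : (B ⊗[ℂ] B) ⊗[ℂ] B →ₗ[ℂ] B ⊗[ℂ] B :=
  TensorProduct.map (adL W s) (mulmid W t)
    ∘ₗ (TensorProduct.assoc ℂ B B B).toLinearMap
    ∘ₗ TensorProduct.map (TensorProduct.comm ℂ B B).toLinearMap LinearMap.id

@[simp] lemma Kmap_tmul (s t p q r : B) :
    Kmap W s t ((p ⊗ₜ[ℂ] q) ⊗ₜ[ℂ] r) = W.ad s q ⊗ₜ[ℂ] (W.S p * t * r) := by
  simp [Kmap, adL_apply]

lemma repr_expand (t : B ⊗[ℂ] B) :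
    t = ∑ s : Module.Free.ChooseBasisIndex ℂ B, ∑ t' : Module.Free.ChooseBasisIndex ℂ B,
      ((((Module.Free.chooseBasis ℂ B).tensorProduct (Module.Free.chooseBasis ℂ B)).repr t)
        (s, t')) •
        (Module.Free.chooseBasis ℂ B s ⊗ₜ[ℂ] Module.Free.chooseBasis ℂ B t') := by
  conv_lhs => rw [← Module.Basis.sum_repr
    ((Module.Free.chooseBasis ℂ B).tensorProduct (Module.Free.chooseBasis ℂ B)) t]
  rw [Fintype.sum_prod_type]
  simp [Module.Basis.tensorProduct_apply]

lemma key3 (a : B) (Z : (B ⊗[ℂ] B) ⊗[ℂ] B) :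
    Psi W a (rho W Z)
      = ∑ s : Module.Free.ChooseBasisIndex ℂ B, ∑ t : Module.Free.ChooseBasisIndex ℂ B,
          ((((Module.Free.chooseBasis ℂ B).tensorProduct
              (Module.Free.chooseBasis ℂ B)).repr (W.Δ a)) (s, t)) •
            Kmap W (Module.Free.chooseBasis ℂ B s) (Module.Free.chooseBasis ℂ B t) Z := by
  induction Z using TensorProduct.induction_on with
  | zero => simp
  | add Z1 Z2 h1 h2 => simp [h1, h2, smul_add, Finset.sum_add_distrib]
  | tmul u r =>
    induction u using TensorProduct.induction_on with
    | zero => simp [zero_tmul]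
    | add u1 u2 h1 h2 => simp [add_tmul, h1, h2, smul_add, Finset.sum_add_distrib]
    | tmul p q =>
      simp only [rho, LinearMap.comp_apply, TensorProduct.map_tmul, LinearMap.id_apply,
        Kmap_tmul, WHA.ad]
      generalize W.Δ q = u
      induction u using TensorProduct.induction_on with
      | zero => simp
      | add u1 u2 h1 h2 =>
        simp only [tmul_add, add_tmul, map_add, h1, h2, TensorProduct.tmul_add]
        rw [← Finset.sum_add_distrib]
        refine Finset.sum_congr rfl fun s _ => ?_
        rw [← Finset.sum_add_distrib]
        refine Finset.sum_congr rfl fun t _ => ?_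
        simp [smul_add, tmul_add]
      | tmul q1 q2 =>
        simp only [xi_tmul, Psi_tmul, TensorProduct.map_tmul, TensorProduct.comm_tmul,
          LinearMap.mul'_apply, LinearMap.mulLeft_apply]
        conv_lhs => rw [repr_expand (W.Δ a)]
        simp [Finset.mul_sum, Finset.sum_mul, smul_mul_assoc, mul_smul_comm,
          Algebra.TensorProduct.tmul_mul_tmul, mul_assoc]

/-- `ε_t` as a linear map. -/
def etL : B →ₗ[ℂ] B :=
  (TensorProduct.lid ℂ B).toLinearMap ∘ₗ TensorProduct.map W.ε LinearMap.id
    ∘ₗ LinearMap.mulLeft ℂ (W.Δ 1) ∘ₗ mkr 1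

@[simp] lemma etL_apply (x : B) : etL W x = W.εt x := rfl

lemma etL_mem (x : B) : etL W x ∈ W.Bt := by
  rw [etL_apply]
  exact Submodule.subset_span ⟨x, rfl⟩

lemma mul_et_aux (u : B ⊗[ℂ] B) (x y : B) :
    ((TensorProduct.lid ℂ B) ((TensorProduct.map W.ε LinearMap.id) (u * (x ⊗ₜ[ℂ] 1)))) * y
      = (TensorProduct.lid ℂ B) ((TensorProduct.map W.ε LinearMap.id) (u * (x ⊗ₜ[ℂ] y))) := by
  induction u using TensorProduct.induction_on with
  | zero => simp
  | tmul p q => simp [Algebra.TensorProduct.tmul_mul_tmul, smul_mul_assoc, mul_assoc]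
  | add u v hu hv => simp only [add_mul, map_add, hu, hv]

lemma mul_etL_aux (t : B ⊗[ℂ] B) :
    LinearMap.mul' ℂ B (TensorProduct.map (etL W) LinearMap.id t)
      = (TensorProduct.lid ℂ B) ((TensorProduct.map W.ε LinearMap.id) (W.Δ 1 * t)) := by
  induction t using TensorProduct.induction_on with
  | zero => simp
  | tmul x y =>
    simp only [TensorProduct.map_tmul, LinearMap.id_apply, LinearMap.mul'_apply, etL_apply,
      WHA.εt]
    exact mul_et_aux W (W.Δ 1) x y
  | add t1 t2 h1 h2 => simp only [map_add, mul_add, h1, h2]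

/-- `ε_t(b₍₁₎) b₍₂₎ = b`. -/
lemma et_absorb (b : B) :
    LinearMap.mul' ℂ B (TensorProduct.map (etL W) LinearMap.id (W.Δ b)) = b := by
  rw [mul_etL_aux, ← W.comul_mul, one_mul, W.counit_left]

lemma map_left_comp (h : B ⊗[ℂ] B →ₗ[ℂ] B) (t : B ⊗[ℂ] B) :
    TensorProduct.map h LinearMap.id (TensorProduct.map W.Δ LinearMap.id t)
      = TensorProduct.map (h ∘ₗ W.Δ) LinearMap.id t := by
  induction t using TensorProduct.induction_on with
  | zero => simp
  | tmul x y => simp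
  | add t1 t2 h1 h2 => simp only [map_add, h1, h2]

lemma step_c (a : B) (Z : (B ⊗[ℂ] B) ⊗[ℂ] B) :
    LinearMap.mul' ℂ B (TensorProduct.map LinearMap.id
        (LinearMap.mul' ℂ B ∘ₗ TensorProduct.map W.S (LinearMap.mulLeft ℂ a))
        ((TensorProduct.assoc ℂ B B B) Z))
      = LinearMap.mul' ℂ B (TensorProduct.map (LinearMap.mulRight ℂ a) LinearMap.id
          (TensorProduct.map (LinearMap.mul' ℂ B ∘ₗ TensorProduct.map LinearMap.id W.S)
            LinearMap.id Z)) := by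
  induction Z using TensorProduct.induction_on with
  | zero => simp
  | tmul u v =>
    induction u using TensorProduct.induction_on with
    | zero => simp [zero_tmul]
    | tmul x y => simp [LinearMap.mul'_apply, mul_assoc]
    | add u1 u2 h1 h2 => simp only [add_tmul, map_add, h1, h2]
  | add Z1 Z2 h1 h2 => simp only [map_add, h1, h2]

lemma adL_split (a : B) (t : B ⊗[ℂ] B) :
    TensorProduct.map LinearMap.id (adL W a) t
      = TensorProduct.map LinearMap.id
          (LinearMap.mul' ℂ B ∘ₗ TensorProduct.map W.S (LinearMap.mulLeft ℂ a))
          (TensorProduct.map LinearMap.id W.Δ t) := by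
  induction t using TensorProduct.induction_on with
  | zero => simp
  | tmul x y => simp [adL]
  | add t1 t2 h1 h2 => simp only [map_add, h1, h2]

lemma etL_comp : (LinearMap.mul' ℂ B ∘ₗ TensorProduct.map LinearMap.id W.S) ∘ₗ W.Δ
    = etL W := by
  apply LinearMap.ext
  intro x
  simpa [WHA.εt] using W.antipode_left x

lemma etL_im_mem (t : B ⊗[ℂ] B) :
    TensorProduct.map (etL W) LinearMap.id t
      ∈ Submodule.span ℂ {z : B ⊗[ℂ] B | ∃ x : B, ∃ v : B, z = (etL W x) ⊗ₜ[ℂ] v} := by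
  induction t using TensorProduct.induction_on with
  | zero => exact Submodule.zero_mem _
  | tmul x y => exact Submodule.subset_span ⟨x, y, by simp⟩
  | add t1 t2 h1 h2 => simpa using Submodule.add_mem _ h1 h2

/-- braided commutativity: `a b = b₍₁₎ (a ◁ b₍₂₎)`. -/
lemma key4 (a b : B) (hacomm : ∀ z ∈ W.Bt, a * z = z * a) :
    LinearMap.mul' ℂ B (TensorProduct.map LinearMap.id (adL W a) (W.Δ b)) = a * b := by
  rw [adL_split, ← W.coassoc b, step_c, map_left_comp, etL_comp]
  have hmem := etL_im_mem W (W.Δ b)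
  have hxy : LinearMap.mul' ℂ B (TensorProduct.map (LinearMap.mulRight ℂ a) LinearMap.id
        (TensorProduct.map (etL W) LinearMap.id (W.Δ b)))
      = a * LinearMap.mul' ℂ B (TensorProduct.map (etL W) LinearMap.id (W.Δ b)) := by
    generalize TensorProduct.map (etL W) LinearMap.id (W.Δ b) = Y at hmem ⊢
    induction hmem using Submodule.span_induction with
    | mem z hz =>
      obtain ⟨x, v, rfl⟩ := hz
      simp only [TensorProduct.map_tmul, LinearMap.id_apply, LinearMap.mul'_apply,
        LinearMap.mulRight_apply]
      rw [← hacomm (etL W x) (etL_mem W x), mul_assoc]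
    | zero => simp
    | add z1 z2 _ _ h1 h2 => simp only [map_add, mul_add, h1, h2]
    | smul c z _ h => simp only [map_smul, LinearMap.map_smul, smul_mul_assoc, mul_smul_comm, h]
  rw [hxy, et_absorb]

lemma repr_expand3 (t : (B ⊗[ℂ] B) ⊗[ℂ] B) :
    t = ∑ p : Module.Free.ChooseBasisIndex ℂ B, ∑ q : Module.Free.ChooseBasisIndex ℂ B,
        ∑ r : Module.Free.ChooseBasisIndex ℂ B,
      ((((((Module.Free.chooseBasis ℂ B).tensorProduct
          (Module.Free.chooseBasis ℂ B)).tensorProduct (Module.Free.chooseBasis ℂ B)).repr t)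
        ((p, q), r)) •
        ((Module.Free.chooseBasis ℂ B p ⊗ₜ[ℂ] Module.Free.chooseBasis ℂ B q)
          ⊗ₜ[ℂ] Module.Free.chooseBasis ℂ B r)) := by
  conv_lhs => rw [← Module.Basis.sum_repr
    (((Module.Free.chooseBasis ℂ B).tensorProduct
      (Module.Free.chooseBasis ℂ B)).tensorProduct (Module.Free.chooseBasis ℂ B)) t]
  rw [Fintype.sum_prod_type, Fintype.sum_prod_type]
  simp [Module.Basis.tensorProduct_apply]

end WHAAux

/-- a coideal stable under the right adjoint action and commuting with `B_t`
satisfies the Yetter-Drinfel'd relation and braided commutativity.  Sweedler sums are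
expressed through coefficients with respect to a chosen basis of `B`. -/
theorem coideal_yetter_drinfeld_braided {B : Type} [NormedRing B] [StarRing B] [CStarRing B]
    [NormedAlgebra ℂ B] [StarModule ℂ B] [FiniteDimensional ℂ B] (W : WHA B)
    (I : Submodule ℂ B) (hco : W.IsCoideal I)
    (hAd : ∀ a ∈ I, ∀ x : B, W.ad a x ∈ I)
    (hComm : ∀ a ∈ I, ∀ z ∈ W.Bt, a * z = z * a) :
    letI ι := Module.Free.ChooseBasisIndex ℂ B
    letI bas := Module.Free.chooseBasis ℂ B
    -- (i)  Δ(a ◁ b) = (a₍₁₎ ◁ b₍₂₎) ⊗ S(b₍₁₎) a₍₂₎ b₍₃₎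
    (∀ a ∈ I, ∀ b : B, W.Δ (W.ad a b) =
      ∑ s : ι, ∑ t : ι, ∑ p : ι, ∑ q : ι, ∑ r : ι,
        (((bas.tensorProduct bas).repr (W.Δ a)) (s, t) *
          ((((bas.tensorProduct bas).tensorProduct bas).repr
            ((TensorProduct.map W.Δ LinearMap.id) (W.Δ b))) ((p, q), r))) •
          ((W.ad (bas s) (bas q)) ⊗ₜ[ℂ] (W.S (bas p) * bas t * bas r))) ∧
    -- (ii)  a b = b₍₁₎ (a ◁ b₍₂₎)
    (∀ a ∈ I, ∀ b ∈ I, a * b =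
      ∑ i : Module.Free.ChooseBasisIndex ℂ B, ∑ j : Module.Free.ChooseBasisIndex ℂ B,
        (((Module.Free.chooseBasis ℂ B).tensorProduct
            (Module.Free.chooseBasis ℂ B)).repr (W.Δ b)) (i, j) •
          (Module.Free.chooseBasis ℂ B i * W.ad a (Module.Free.chooseBasis ℂ B j))) := by
  constructor
  · intro a ha b
    rw [WHAAux.key1, WHAAux.key2, WHAAux.key3]
    refine Finset.sum_congr rfl fun s _ => Finset.sum_congr rfl fun t _ => ?_
    conv_lhs => rw [WHAAux.repr_expand3 (TensorProduct.map W.Δ LinearMap.id (W.Δ b))]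
    simp [Finset.smul_sum, smul_smul]
  · intro a ha b hb
    rw [← WHAAux.key4 W a b (fun z hz => hComm a ha z hz)]
    conv_lhs => rw [WHAAux.repr_expand (W.Δ b)]
    simp [WHAAux.adL_apply, LinearMap.mul'_apply]

end
end
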